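/- arXiv:1902.02951 — 4 statements merged into one kernel-verified Lean document; each statement's English description precedes it below -/
import Mathlib

section
/- Let a ≥ 0, c > 0, and let u : [t0,ϑ] → [0,∞) be continuous and satisfy u(t) ≤ a + (c/Γ(α)) ∫_{t0}^{t} (t−τ)^{α−1} u(τ) dτ for all t ∈ [t0,ϑ]. Then u(t) ≤ a·E_α(c·(t−t0)^α) for all t ∈ [t0,ϑ], where E_α(z) = ∑_{k=0}^{∞} z^k / Γ(αk+1) is the Mittag-Leffler function. -/
open MeasureTheory Set
open scoped RealInnerProductSpace NNReal

noncomputable section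

/-- `ℝ^n`. -/
abbrev Evec (n : ℕ) := EuclideanSpace ℝ (Fin n)

/-- The Riemann–Liouville fractional integral of order `β` with basepoint `t0`:
`(I^β φ)(t) = (1/Γ(β)) ∫_{t0}^{t} (t-τ)^{β-1} φ(τ) dτ`. -/
def RL (t0 β : ℝ) {n : ℕ} (φ : ℝ → Evec n) (t : ℝ) : Evec n :=
  (1 / Real.Gamma β) • ∫ τ in t0..t, ((t - τ) ^ (β - 1)) • φ τ

/-- The Mittag-Leffler function `E_α(z) = ∑_{k} z^k / Γ(αk+1)`. -/
def ML (α z : ℝ) : ℝ := ∑' k : ℕ, z ^ k / Real.Gamma (α * k + 1)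

/-- The binomial coefficient `binom(β, i) = ∏_{j=0}^{i-1} (β-j)/(j+1)`. -/
def glCoef (β : ℝ) (i : ℕ) : ℝ := ∏ j ∈ Finset.range i, ((β - (j : ℝ)) / ((j : ℝ) + 1))

/-- The Grünwald–Letnikov fractional difference
`(Δ_h^{1-α} y)(t) = ∑_{i=0}^{⌊(t-t0)/h⌋} (-1)^i binom(1-α, i) y(t - i h)`. -/
def glDiff (t0 α h : ℝ) {n : ℕ} (y : ℝ → Evec n) (t : ℝ) : Evec n :=
  ∑ i ∈ Finset.range (⌊(t - t0) / h⌋₊ + 1),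
    ((-1 : ℝ) ^ i * glCoef (1 - α) i) • y (t - (i : ℝ) * h)

/-- The state `w0 + h^{α-1} (Δ_h^{1-α} y)(t)` of the original system reconstructed
from the state `y` of the approximating system. -/
def approxState (t0 α h : ℝ) {n : ℕ} (w0 : Evec n) (y : ℝ → Evec n) (t : ℝ) : Evec n :=
  w0 + (h ^ (α - 1)) • glDiff t0 α h y t

/-- Condition (A.1): `f` is continuous. -/
def CondA1 (t0 ϑ : ℝ) {n r s : ℕ} (U : Set (Evec r)) (V : Set (Evec s))
    (f : ℝ → Evec n → Evec r → Evec s → Evec n) : Prop :=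
  ContinuousOn (fun z : ℝ × Evec n × Evec r × Evec s => f z.1 z.2.1 z.2.2.1 z.2.2.2)
    ((Icc t0 ϑ) ×ˢ (univ : Set (Evec n)) ×ˢ U ×ˢ V)

/-- Condition (A.2): `f` is locally Lipschitz in the state variable, uniformly in the rest. -/
def CondA2 (t0 ϑ : ℝ) {n r s : ℕ} (U : Set (Evec r)) (V : Set (Evec s))
    (f : ℝ → Evec n → Evec r → Evec s → Evec n) : Prop :=
  ∀ R : ℝ, 0 ≤ R → ∃ lam > (0 : ℝ), ∀ t ∈ Icc t0 ϑ, ∀ x x' : Evec n, ‖x‖ ≤ R → ‖x'‖ ≤ R →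
    ∀ u ∈ U, ∀ v ∈ V, ‖f t x u v - f t x' u v‖ ≤ lam * ‖x - x'‖

/-- Condition (A.3): sublinear growth `‖f(t,x,u,v)‖ ≤ (1+‖x‖)c`. -/
def CondA3 (t0 ϑ : ℝ) {n r s : ℕ} (U : Set (Evec r)) (V : Set (Evec s))
    (f : ℝ → Evec n → Evec r → Evec s → Evec n) (c : ℝ) : Prop :=
  ∀ t ∈ Icc t0 ϑ, ∀ x : Evec n, ∀ u ∈ U, ∀ v ∈ V, ‖f t x u v‖ ≤ (1 + ‖x‖) * c

/-- Condition (A.4): the saddle point condition in a small game (Isaacs' condition). -/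
def CondA4 (t0 ϑ : ℝ) {n r s : ℕ} (U : Set (Evec r)) (V : Set (Evec s))
    (f : ℝ → Evec n → Evec r → Evec s → Evec n) : Prop :=
  ∀ t ∈ Icc t0 ϑ, ∀ x sv : Evec n,
    sInf ((fun u => sSup ((fun v => ⟪sv, f t x u v⟫) '' V)) '' U)
      = sSup ((fun v => sInf ((fun u => ⟪sv, f t x u v⟫) '' U)) '' V)

/-- Condition (A.5): `σ` depends only on the restriction of its argument to `[t0, ϑ]` and
is continuous with respect to the uniform norm on `C([t0,ϑ], ℝ^n)`. -/
def CondA5 (t0 ϑ : ℝ) {n : ℕ} (σ : (ℝ → Evec n) → ℝ) : Prop :=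
  (∀ x x' : ℝ → Evec n, (∀ t ∈ Icc t0 ϑ, x t = x' t) → σ x = σ x') ∧
  ∀ x : ℝ → Evec n, ContinuousOn x (Icc t0 ϑ) → ∀ ε > (0 : ℝ), ∃ δ > (0 : ℝ),
    ∀ x' : ℝ → Evec n, ContinuousOn x' (Icc t0 ϑ) →
      (∀ t ∈ Icc t0 ϑ, ‖x t - x' t‖ ≤ δ) → |σ x - σ x'| ≤ ε

/-- An admissible position `(t, w(·))` of the original fractional system, together with the
(Caputo-derivative) witness `φ`. -/
def IsAdmissible (t0 ϑ α c R0 : ℝ) {n : ℕ} (t : ℝ) (w φ : ℝ → Evec n) : Prop :=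
  t ∈ Icc t0 ϑ ∧ ContinuousOn w (Icc t0 t) ∧ ‖w t0‖ ≤ R0 ∧
  Measurable φ ∧ (∃ K : ℝ, ∀ᵐ τ ∂(volume.restrict (Icc t0 t)), ‖φ τ‖ ≤ K) ∧
  (∀ τ ∈ Icc t0 t, w τ = w t0 + RL t0 α φ τ) ∧
  (∀ᵐ τ ∂(volume.restrict (Icc t0 t)), ‖φ τ‖ ≤ (1 + ‖w τ‖) * c)

/-- An admissible control realization on `[tstar, ϑ]` with values in `U`. -/
def IsControl {m : ℕ} (tstar ϑ : ℝ) (U : Set (Evec m)) (u : ℝ → Evec m) : Prop :=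
  Measurable u ∧ ∀ t ∈ Icc tstar ϑ, u t ∈ U

/-- The motion of the original fractional system generated from the initial position
`(tstar, wstar(·))` (with Caputo derivative `φstar`) by control realizations `u`, `v`. -/
def IsMotion (t0 ϑ α : ℝ) {n r s : ℕ} (f : ℝ → Evec n → Evec r → Evec s → Evec n)
    (tstar : ℝ) (wstar φstar : ℝ → Evec n) (u : ℝ → Evec r) (v : ℝ → Evec s)
    (x : ℝ → Evec n) : Prop :=
  ContinuousOn x (Icc t0 ϑ) ∧
  (∀ t ∈ Icc t0 tstar, x t = wstar t) ∧
  (∀ t ∈ Icc tstar ϑ, x t = wstar t0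
    + (1 / Real.Gamma α) • (∫ τ in t0..tstar, ((t - τ) ^ (α - 1)) • φstar τ)
    + (1 / Real.Gamma α) • (∫ τ in tstar..t, ((t - τ) ^ (α - 1)) • f τ (x τ) (u τ) (v τ)))

/-- The motion of the approximating retarded-type system, with parameters `w0`, `h`,
generated from the initial position `(tstar, rstar(·))` by control realizations `p`, `q`. -/
def IsApproxMotion (t0 ϑ α : ℝ) {n r s : ℕ} (f : ℝ → Evec n → Evec r → Evec s → Evec n)
    (w0 : Evec n) (h : ℝ) (tstar : ℝ) (rstar : ℝ → Evec n)
    (p : ℝ → Evec r) (q : ℝ → Evec s) (y : ℝ → Evec n) : Prop :=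
  (∃ K : ℝ≥0, LipschitzOnWith K y (Icc t0 ϑ)) ∧
  (∀ t ∈ Icc t0 tstar, y t = rstar t) ∧
  (∀ᵐ t ∂(volume.restrict (Icc tstar ϑ)),
    HasDerivAt y (f t (approxState t0 α h w0 y t) (p t) (q t)) t)

/-- The initial position of the approximating system corresponding to an initial
position `(tstar, wstar(·))` of the original system:
`r*(t) = (I^{1-α}(w*(·) - w*(t0)))(t)`. -/
def rstarOf (t0 α : ℝ) {n : ℕ} (wstar : ℝ → Evec n) : ℝ → Evec n :=
  RL t0 (1 - α) (fun τ => wstar τ - wstar t0)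

/-- A non-anticipative strategy: a map from opponent control realizations (valued in `VO`)
to own control realizations (valued in `UO`) such that a.e. coincidence of inputs up to any
time implies a.e. coincidence of outputs up to that time. -/
def Nonanticipative {a b : ℕ} (tstar ϑ : ℝ) (UO : Set (Evec a)) (VO : Set (Evec b))
    (A : (ℝ → Evec b) → (ℝ → Evec a)) : Prop :=
  (∀ v, IsControl tstar ϑ VO v → IsControl tstar ϑ UO (A v)) ∧
  ∀ that ∈ Icc tstar ϑ, ∀ v v', IsControl tstar ϑ VO v → IsControl tstar ϑ VO v' →
    (∀ᵐ t ∂(volume.restrict (Icc tstar that)), v t = v' t) →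
    (∀ᵐ t ∂(volume.restrict (Icc tstar that)), A v t = A v' t)

/-- The lower value `Γ⁻(t*, w*(·)) = inf_A sup_{v(·)} σ(x(·))` of the original game. -/
def lowerValue (t0 ϑ α : ℝ) {n r s : ℕ} (U : Set (Evec r)) (V : Set (Evec s))
    (f : ℝ → Evec n → Evec r → Evec s → Evec n) (σ : (ℝ → Evec n) → ℝ)
    (tstar : ℝ) (wstar φstar : ℝ → Evec n) : ℝ :=
  sInf { a : ℝ | ∃ A : (ℝ → Evec s) → (ℝ → Evec r), Nonanticipative tstar ϑ U V A ∧
    a = sSup { g : ℝ | ∃ v x, IsControl tstar ϑ V v ∧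
      IsMotion t0 ϑ α f tstar wstar φstar (A v) v x ∧ g = σ x } }

/-- The upper value `Γ⁺(t*, w*(·)) = sup_B inf_{u(·)} σ(x(·))` of the original game. -/
def upperValue (t0 ϑ α : ℝ) {n r s : ℕ} (U : Set (Evec r)) (V : Set (Evec s))
    (f : ℝ → Evec n → Evec r → Evec s → Evec n) (σ : (ℝ → Evec n) → ℝ)
    (tstar : ℝ) (wstar φstar : ℝ → Evec n) : ℝ :=
  sSup { a : ℝ | ∃ B : (ℝ → Evec r) → (ℝ → Evec s), Nonanticipative tstar ϑ V U B ∧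
    a = sInf { g : ℝ | ∃ u x, IsControl tstar ϑ U u ∧
      IsMotion t0 ϑ α f tstar wstar φstar u (B u) x ∧ g = σ x } }

/-- The lower value of the approximating differential game with parameters `w0`, `h`,
from the initial position `(tstar, rstar(·))`. -/
def approxValue (t0 ϑ α : ℝ) {n r s : ℕ} (U : Set (Evec r)) (V : Set (Evec s))
    (f : ℝ → Evec n → Evec r → Evec s → Evec n) (σ : (ℝ → Evec n) → ℝ)
    (w0 : Evec n) (h : ℝ) (tstar : ℝ) (rstar : ℝ → Evec n) : ℝ :=
  sInf { a : ℝ | ∃ A : (ℝ → Evec s) → (ℝ → Evec r), Nonanticipative tstar ϑ U V A ∧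
    a = sSup { g : ℝ | ∃ q y, IsControl tstar ϑ V q ∧
      IsApproxMotion t0 ϑ α f w0 h tstar rstar (A q) q y ∧
      g = σ (approxState t0 α h w0 y) } }

/-- The upper value of the approximating differential game. -/
def approxUpperValue (t0 ϑ α : ℝ) {n r s : ℕ} (U : Set (Evec r)) (V : Set (Evec s))
    (f : ℝ → Evec n → Evec r → Evec s → Evec n) (σ : (ℝ → Evec n) → ℝ)
    (w0 : Evec n) (h : ℝ) (tstar : ℝ) (rstar : ℝ → Evec n) : ℝ :=
  sSup { a : ℝ | ∃ B : (ℝ → Evec r) → (ℝ → Evec s), Nonanticipative tstar ϑ V U B ∧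
    a = sInf { g : ℝ | ∃ p y, IsControl tstar ϑ U p ∧
      IsApproxMotion t0 ϑ α f w0 h tstar rstar p (B p) y ∧
      g = σ (approxState t0 α h w0 y) } }

/-- The value `Γ_h(t*, w*(·))` of the approximating game for an admissible position of the
original system. -/
def GammaH (t0 ϑ α : ℝ) {n r s : ℕ} (U : Set (Evec r)) (V : Set (Evec s))
    (f : ℝ → Evec n → Evec r → Evec s → Evec n) (σ : (ℝ → Evec n) → ℝ)
    (h : ℝ) (tstar : ℝ) (wstar : ℝ → Evec n) : ℝ :=
  approxValue t0 ϑ α U V f σ (wstar t0) h tstar (rstarOf t0 α wstar)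

/-- An admissible position `(t, rr(·)) ∈ G_h^0` of the approximating system, where
`ctilde` is the constant `c̃_h`. -/
def IsApproxAdmissiblePos (t0 ϑ : ℝ) (ctilde : ℝ) {n : ℕ} (t : ℝ) (rr : ℝ → Evec n) : Prop :=
  t ∈ Icc t0 ϑ ∧ rr t0 = 0 ∧ (∃ K : ℝ≥0, LipschitzOnWith K rr (Icc t0 t)) ∧
  ∀ᵐ τ ∂(volume.restrict (Icc t0 t)), ∀ d : Evec n, HasDerivAt rr d τ →
    ‖d‖ ≤ (1 + sSup ((fun ξ => ‖rr ξ‖) '' Icc t0 τ)) * ctilde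

/-- A partition `t* = τ_1 < τ_2 < … < τ_{k+1} = ϑ` of `[t*, ϑ]`. -/
def IsPartition (tstar ϑ : ℝ) (k : ℕ) (τ : ℕ → ℝ) : Prop :=
  1 ≤ k ∧ τ 1 = tstar ∧ τ (k + 1) = ϑ ∧ ∀ j : ℕ, 1 ≤ j → j ≤ k → τ j < τ (j + 1)

/-- `u0` attains `min_{u ∈ U} max_{v ∈ V} ⟨sv, f(t, x, u, v)⟩`. -/
def MinMaxPoint {n r s : ℕ} (U : Set (Evec r)) (V : Set (Evec s))
    (f : ℝ → Evec n → Evec r → Evec s → Evec n) (t : ℝ) (x sv : Evec n) (u0 : Evec r) : Prop :=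
  u0 ∈ U ∧ ∀ u ∈ U,
    sSup ((fun v => ⟪sv, f t x u0 v⟫) '' V) ≤ sSup ((fun v => ⟪sv, f t x u v⟫) '' V)

/-- `v0` attains `max_{v ∈ V} min_{u ∈ U} ⟨sv, f(t, x, u, v)⟩`. -/
def MaxMinPoint {n r s : ℕ} (U : Set (Evec r)) (V : Set (Evec s))
    (f : ℝ → Evec n → Evec r → Evec s → Evec n) (t : ℝ) (x sv : Evec n) (v0 : Evec s) : Prop :=
  v0 ∈ V ∧ ∀ v ∈ V,
    sInf ((fun u => ⟪sv, f t x u v⟫) '' U) ≤ sInf ((fun u => ⟪sv, f t x u v0⟫) '' U)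

/-- The first player's mutual aiming rule: on each step `[τ_j, τ_{j+1})`, with
`s_j = x(τ_j) - w0 - h^{α-1}(Δ_h^{1-α} y)(τ_j)`, the control `u` in the original system
attains the corresponding minimax and the control `q` in the guide attains the corresponding
maximin, both controls being constant on the step. -/
def FirstAiming (t0 α : ℝ) {n r s : ℕ} (U : Set (Evec r)) (V : Set (Evec s))
    (f : ℝ → Evec n → Evec r → Evec s → Evec n) (w0 : Evec n) (h : ℝ)
    (k : ℕ) (τ : ℕ → ℝ) (x y : ℝ → Evec n) (u : ℝ → Evec r) (q : ℝ → Evec s) : Prop :=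
  ∀ j : ℕ, 1 ≤ j → j ≤ k →
    MinMaxPoint U V f (τ j) (x (τ j))
      (x (τ j) - approxState t0 α h w0 y (τ j)) (u (τ j)) ∧
    MaxMinPoint U V f (τ j) (approxState t0 α h w0 y (τ j))
      (x (τ j) - approxState t0 α h w0 y (τ j)) (q (τ j)) ∧
    ∀ t ∈ Ico (τ j) (τ (j + 1)), u t = u (τ j) ∧ q t = q (τ j)

/-- The second player's mutual aiming rule: on each step `[τ_j, τ_{j+1})`, with
`s_j = w0 + h^{α-1}(Δ_h^{1-α} y)(τ_j) - x(τ_j)`, the control `v` in the original system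
attains the corresponding maximin and the control `p` in the guide attains the corresponding
minimax, both controls being constant on the step. -/
def SecondAiming (t0 α : ℝ) {n r s : ℕ} (U : Set (Evec r)) (V : Set (Evec s))
    (f : ℝ → Evec n → Evec r → Evec s → Evec n) (w0 : Evec n) (h : ℝ)
    (k : ℕ) (τ : ℕ → ℝ) (x y : ℝ → Evec n) (v : ℝ → Evec s) (p : ℝ → Evec r) : Prop :=
  ∀ j : ℕ, 1 ≤ j → j ≤ k →
    MaxMinPoint U V f (τ j) (x (τ j))
      (approxState t0 α h w0 y (τ j) - x (τ j)) (v (τ j)) ∧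
    MinMaxPoint U V f (τ j) (approxState t0 α h w0 y (τ j))
      (approxState t0 α h w0 y (τ j) - x (τ j)) (p (τ j)) ∧
    ∀ t ∈ Ico (τ j) (τ (j + 1)), v t = v (τ j) ∧ p t = p (τ j)


lemma auxBeta {u v : ℝ} (hu : 0 < u) (hv : 0 < v) :
    ∫ x in (0:ℝ)..1, x ^ (u - 1) * (1 - x) ^ (v - 1)
      = Real.Gamma u * Real.Gamma v / Real.Gamma (u + v) := by
  have hB : Complex.betaIntegral u v
      = ((∫ x in (0:ℝ)..1, x ^ (u - 1) * (1 - x) ^ (v - 1) : ℝ) : ℂ) := by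
    rw [Complex.betaIntegral, ← intervalIntegral.integral_ofReal]
    refine intervalIntegral.integral_congr fun x hx => ?_
    rw [Set.uIcc_of_le (zero_le_one' ℝ)] at hx
    push_cast
    rw [Complex.ofReal_cpow hx.1, Complex.ofReal_cpow (by linarith [hx.2] : (0:ℝ) ≤ 1 - x)]
    push_cast
    ring
  have h := Complex.Gamma_mul_Gamma_eq_betaIntegral
    (s := (u:ℂ)) (t := (v:ℂ)) (by simpa using hu) (by simpa using hv)
  rw [hB] at h
  rw [← Complex.ofReal_add, Complex.Gamma_ofReal, Complex.Gamma_ofReal,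
    Complex.Gamma_ofReal, ← Complex.ofReal_mul, ← Complex.ofReal_mul] at h
  have h' := Complex.ofReal_injective h
  rw [h']
  field_simp [(Real.Gamma_pos_of_pos (by linarith : (0:ℝ) < u + v)).ne']

lemma auxConv {t0 t p q : ℝ} (ht : t0 < t) (hp : 0 < p) (hq : 0 < q) :
    ∫ τ in t0..t, (t - τ) ^ (p - 1) * (τ - t0) ^ (q - 1)
      = (t - t0) ^ (p + q - 1) * (Real.Gamma p * Real.Gamma q / Real.Gamma (p + q)) := by
  set T := t - t0 with hT
  have hT0 : 0 < T := by simp only [hT]; linarith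
  have e1 : ∫ τ in t0..t, (t - τ) ^ (p - 1) * (τ - t0) ^ (q - 1)
      = ∫ s in (0:ℝ)..T, (T - s) ^ (p - 1) * s ^ (q - 1) := by
    have := intervalIntegral.integral_comp_add_right (a := (0:ℝ)) (b := T)
      (fun τ => (t - τ) ^ (p - 1) * (τ - t0) ^ (q - 1)) t0
    simp only [zero_add] at this
    rw [(by ring : T + t0 = t)] at this
    rw [← this]
    refine intervalIntegral.integral_congr fun s hs => ?_
    have : t - (s + t0) = T - s := by rw [hT]; ring
    rw [this, add_sub_cancel_right]
  have e2 : T • (∫ x in (0:ℝ)..1, (fun s => (T - s) ^ (p - 1) * s ^ (q - 1)) (T * x))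
      = ∫ s in (0:ℝ)..T, (T - s) ^ (p - 1) * s ^ (q - 1) := by
    have := intervalIntegral.smul_integral_comp_mul_left (a := (0:ℝ)) (b := 1)
      (fun s => (T - s) ^ (p - 1) * s ^ (q - 1)) T
    simpa using this
  have e3 : ∫ x in (0:ℝ)..1, (fun s => (T - s) ^ (p - 1) * s ^ (q - 1)) (T * x)
      = (T ^ (p - 1) * T ^ (q - 1)) * ∫ x in (0:ℝ)..1, x ^ (q - 1) * (1 - x) ^ (p - 1) := by
    rw [← intervalIntegral.integral_const_mul]
    refine intervalIntegral.integral_congr fun x hx => ?_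
    rw [Set.uIcc_of_le (zero_le_one' ℝ)] at hx
    simp only
    have h1 : T - T * x = T * (1 - x) := by ring
    rw [h1, Real.mul_rpow hT0.le (by linarith [hx.2]), Real.mul_rpow hT0.le hx.1]
    ring
  rw [e1, ← e2, e3, auxBeta hq hp, smul_eq_mul]
  have h4 : T * (T ^ (p - 1) * T ^ (q - 1)) = T ^ (p + q - 1) := by
    rw [← Real.rpow_add hT0]
    nth_rewrite 1 [← Real.rpow_one T]
    rw [← Real.rpow_add hT0]
    ring_nf
  rw [add_comm q p, ← h4]
  ring

lemma auxInt {t0 t p : ℝ} (hp : 0 < p) {g : ℝ → ℝ}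
    (hg : ContinuousOn g (Set.uIcc t0 t)) :
    IntervalIntegrable (fun τ => (t - τ) ^ (p - 1) * g τ) volume t0 t := by
  have h0 : IntervalIntegrable (fun x : ℝ => x ^ (p - 1)) volume (t - t0) (t - t) :=
    intervalIntegral.intervalIntegrable_rpow' (by linarith)
  have h1 : IntervalIntegrable (fun τ => (t - τ) ^ (p - 1)) volume t0 t := by
    simpa using h0.comp_sub_left t
  exact h1.mul_continuousOn hg

lemma auxGammaRatio {α x : ℝ} (hα : 0 < α) (hα1 : α < 1) (hx : 0 < x) :
    Real.Gamma (x + 1) ≤ Real.Gamma (x + α) * (x + α) ^ (1 - α) := by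
  have hxα : 0 < x + α := by linarith
  have hg := Real.Gamma_pos_of_pos hxα
  have h := Real.Gamma_mul_add_mul_le_rpow_Gamma_mul_rpow_Gamma
    (s := x + α) (t := x + 1 + α) (a := α) (b := 1 - α) hxα (by linarith) hα
    (by linarith) (by ring)
  rw [(by ring : α * (x + α) + (1 - α) * (x + 1 + α) = x + 1)] at h
  have hΓ : Real.Gamma (x + 1 + α) = (x + α) * Real.Gamma (x + α) := by
    rw [(by ring : x + 1 + α = (x + α) + 1), Real.Gamma_add_one hxα.ne']
  rw [hΓ, Real.mul_rpow hxα.le hg.le] at h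
  have hpow : Real.Gamma (x + α) ^ α * Real.Gamma (x + α) ^ (1 - α) = Real.Gamma (x + α) := by
    rw [← Real.rpow_add hg]; norm_num
  calc Real.Gamma (x + 1) ≤ Real.Gamma (x + α) ^ α * ((x + α) ^ (1 - α)
        * Real.Gamma (x + α) ^ (1 - α)) := h
    _ = Real.Gamma (x + α) ^ α * Real.Gamma (x + α) ^ (1 - α) * (x + α) ^ (1 - α) := by ring
    _ = Real.Gamma (x + α) * (x + α) ^ (1 - α) := by rw [hpow]

lemma auxSummable {α z : ℝ} (hα : 0 < α) (hα1 : α < 1) (hz : 0 ≤ z) :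
    Summable (fun k : ℕ => z ^ k / Real.Gamma (α * k + 1)) := by
  set f : ℕ → ℝ := fun k => z ^ k / Real.Gamma (α * k + 1) with hf
  refine summable_of_ratio_norm_eventually_le (r := 1/2) (by norm_num) ?_
  rw [Filter.eventually_atTop]
  refine ⟨⌈(4 * z + 1) ^ α⁻¹ / α⌉₊, fun k hk => ?_⟩
  set x : ℝ := α * k + 1 with hxdef
  have hx : 0 < x := by positivity
  have hgx := Real.Gamma_pos_of_pos hx
  have hxα : 0 < x + α := by linarith
  have hgxα := Real.Gamma_pos_of_pos hxα
  -- `x ^ α ≥ 4 z + 1`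
  have hy : (0:ℝ) ≤ (4 * z + 1) ^ α⁻¹ := Real.rpow_nonneg (by linarith) _
  have hyx : (4 * z + 1) ^ α⁻¹ ≤ x := by
    have h1 : (4 * z + 1) ^ α⁻¹ / α ≤ (k : ℕ) := le_trans (Nat.le_ceil _) (Nat.cast_le.mpr hk)
    have := (div_le_iff₀ hα).mp h1
    rw [hxdef]; nlinarith
  have hxpow : 4 * z + 1 ≤ x ^ α := by
    have := Real.rpow_le_rpow hy hyx hα.le
    rwa [← Real.rpow_mul (by linarith : (0:ℝ) ≤ 4 * z + 1),
      inv_mul_cancel₀ hα.ne', Real.rpow_one] at this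
  -- key Gamma bound
  have hkey : x * Real.Gamma x ≤ Real.Gamma (x + α) * (x + α) ^ (1 - α) := by
    have := auxGammaRatio hα hα1 hx
    rwa [Real.Gamma_add_one hx.ne'] at this
  -- arithmetic: `z * (x+α)^(1-α) ≤ x / 2`
  have hb1 : (x + α) ^ (1 - α) ≤ 2 * x ^ (1 - α) := by
    calc (x + α) ^ (1 - α) ≤ (2 * x) ^ (1 - α) := by
          apply Real.rpow_le_rpow hxα.le (by nlinarith) (by linarith)
      _ = 2 ^ (1 - α) * x ^ (1 - α) := Real.mul_rpow (by norm_num) hx.le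
      _ ≤ 2 * x ^ (1 - α) := by
          have h2 : (2:ℝ) ^ (1 - α) ≤ 2 ^ (1:ℝ) :=
            Real.rpow_le_rpow_of_exponent_le (by norm_num) (by linarith)
          rw [Real.rpow_one] at h2
          have := Real.rpow_nonneg hx.le (1 - α)
          nlinarith
  have hb2 : x ^ (1 - α) * x ^ α = x := by
    rw [← Real.rpow_add hx]; norm_num
  have hmain : z * (x + α) ^ (1 - α) ≤ x / 2 := by
    have h3 : z * (x + α) ^ (1 - α) ≤ 2 * z * x ^ (1 - α) := by
      have := Real.rpow_nonneg hxα.le (1 - α)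
      nlinarith
    have h4 : 4 * z * x ^ (1 - α) ≤ x := by
      calc 4 * z * x ^ (1 - α) ≤ x ^ α * x ^ (1 - α) := by
            have := Real.rpow_nonneg hx.le (1 - α)
            nlinarith
        _ = x := by rw [mul_comm]; exact hb2
    linarith
  -- assemble
  have hΓeq : Real.Gamma (α * (k + 1 : ℕ) + 1) = Real.Gamma (x + α) := by
    congr 1; rw [hxdef]; push_cast; ring
  have hfk1 : f (k + 1) = z * z ^ k / Real.Gamma (x + α) := by
    rw [hf]; simp only [hΓeq, pow_succ]; ring_nf
  have hnn1 : 0 ≤ f (k + 1) := by rw [hfk1]; positivity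
  have hnn0 : 0 ≤ f k := by rw [hf]; positivity
  rw [Real.norm_of_nonneg hnn1, Real.norm_of_nonneg hnn0, hfk1]
  rw [hf]
  simp only
  rw [← hxdef]
  have hzk : (0:ℝ) ≤ z ^ k := by positivity
  have hzΓ : 2 * (z * Real.Gamma x) ≤ Real.Gamma (x + α) := by
    have h5 : z * (x * Real.Gamma x) ≤ z * (Real.Gamma (x + α) * (x + α) ^ (1 - α)) :=
      mul_le_mul_of_nonneg_left hkey hz
    have h6 : Real.Gamma (x + α) * (z * (x + α) ^ (1 - α)) ≤
        Real.Gamma (x + α) * (x / 2) := mul_le_mul_of_nonneg_left hmain hgxα.le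
    have h7 : 2 * (z * Real.Gamma x) * x ≤ Real.Gamma (x + α) * x := by nlinarith
    exact le_of_mul_le_mul_right h7 hx
  rw [div_le_iff₀ hgxα, show (1:ℝ) / 2 * (z ^ k / Real.Gamma x) * Real.Gamma (x + α)
      = z ^ k * Real.Gamma (x + α) / (2 * Real.Gamma x) by ring,
    le_div_iff₀ (by positivity : (0:ℝ) < 2 * Real.Gamma x)]
  calc z * z ^ k * (2 * Real.Gamma x) = z ^ k * (2 * (z * Real.Gamma x)) := by ring
    _ ≤ z ^ k * Real.Gamma (x + α) := mul_le_mul_of_nonneg_left hzΓ hzk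

lemma auxIntSum {t0 t α : ℝ} (ht : t0 < t) (hα : 0 < α) (m : ℕ) (coef : ℕ → ℝ) :
    ∫ τ in t0..t, ∑ j ∈ Finset.range m, coef j * ((t - τ) ^ (α - 1) * (τ - t0) ^ (α * j))
      = ∑ j ∈ Finset.range m, coef j * ((t - t0) ^ (α * ((j:ℝ) + 1))
          * (Real.Gamma α * Real.Gamma (α * j + 1) / Real.Gamma (α * ((j:ℝ) + 1) + 1))) := by
  have hInt : ∀ j : ℕ, IntervalIntegrable
      (fun τ => coef j * ((t - τ) ^ (α - 1) * (τ - t0) ^ (α * j))) volume t0 t := by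
    intro j
    apply IntervalIntegrable.const_mul
    apply auxInt hα
    apply Continuous.continuousOn
    exact (continuous_id.sub continuous_const).rpow_const (fun τ => Or.inr (by positivity))
  rw [intervalIntegral.integral_finset_sum (fun j _ => hInt j)]
  refine Finset.sum_congr rfl fun j hj => ?_
  rw [intervalIntegral.integral_const_mul]
  congr 1
  have h := auxConv (t0 := t0) (t := t) (p := α) (q := α * j + 1) ht hα (by positivity)
  have h2 : α + (α * (j:ℝ) + 1) - 1 = α * ((j:ℝ) + 1) := by ring
  have h3 : α + (α * (j:ℝ) + 1) = α * ((j:ℝ) + 1) + 1 := by ring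
  rw [h2, h3] at h
  simpa only [add_sub_cancel_right] using h

/-- the fractional (Bellman–Gronwall) lemma: if a continuous nonnegative `u`
satisfies `u(t) ≤ a + (c/Γ(α)) ∫_{t0}^{t} (t-τ)^{α-1} u(τ) dτ` on `[t0,ϑ]`, then
`u(t) ≤ a E_α(c (t-t0)^α)` on `[t0,ϑ]`. -/
theorem fractional_gronwall
    (t0 ϑ : ℝ) (hT : t0 < ϑ) (α : ℝ) (hα : α ∈ Set.Ioo (0 : ℝ) 1)
    (a c : ℝ) (ha : 0 ≤ a) (hc : 0 < c) (u : ℝ → ℝ)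
    (hu : ContinuousOn u (Icc t0 ϑ)) (hnn : ∀ t ∈ Icc t0 ϑ, 0 ≤ u t)
    (hineq : ∀ t ∈ Icc t0 ϑ,
      u t ≤ a + (c / Real.Gamma α) * ∫ τ in t0..t, ((t - τ) ^ (α - 1)) * u τ) :
    ∀ t ∈ Icc t0 ϑ, u t ≤ a * ML α (c * (t - t0) ^ α) := by
  obtain ⟨hα0, hα1⟩ := hα
  have hΓα := Real.Gamma_pos_of_pos hα0
  obtain ⟨ξ, hξ, hmax'⟩ := isCompact_Icc.exists_isMaxOn (nonempty_Icc.mpr hT.le) hu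
  have hmax : ∀ y ∈ Icc t0 ϑ, u y ≤ u ξ := fun y hy => hmax' hy
  set M := u ξ with hM
  have hu0 : u t0 ≤ a := by
    have h := hineq t0 (left_mem_Icc.mpr hT.le)
    simpa using h
  have key : ∀ k : ℕ, ∀ t ∈ Icc t0 ϑ,
      u t ≤ a * (∑ j ∈ Finset.range k, (c * (t - t0) ^ α) ^ j / Real.Gamma (α * j + 1))
        + M * (c * (t - t0) ^ α) ^ k / Real.Gamma (α * k + 1) := by
    intro k
    induction k with
    | zero =>
      intro t htt
      simpa [Real.Gamma_one] using hmax t htt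
    | succ k IH =>
      intro t htt
      rcases eq_or_lt_of_le htt.1 with h0 | h0
      · -- t = t0
        rw [← h0]
        have hz : (c * (t0 - t0) ^ α) = 0 := by
          rw [sub_self, Real.zero_rpow hα0.ne', mul_zero]
        rw [hz, Finset.sum_range_succ']
        simpa [Real.Gamma_one, zero_pow] using hu0
      · -- t0 < t
        have hsub : Icc t0 t ⊆ Icc t0 ϑ := Icc_subset_Icc le_rfl htt.2
        have huI : Set.uIcc t0 t = Icc t0 t := uIcc_of_le h0.le
        have hcontpow : Continuous (fun τ : ℝ => (τ - t0) ^ α) :=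
          (continuous_id.sub continuous_const).rpow_const (fun τ => Or.inr hα0.le)
        set X : ℝ → ℝ := fun τ => c * (τ - t0) ^ α with hXdef
        set coef : ℕ → ℝ := fun j =>
          if j = k then M * c ^ k / Real.Gamma (α * k + 1)
          else a * c ^ j / Real.Gamma (α * j + 1) with hcoef
        set S : ℝ → ℝ := fun τ =>
          a * (∑ j ∈ Finset.range k, (c * (τ - t0) ^ α) ^ j / Real.Gamma (α * j + 1))
            + M * (c * (τ - t0) ^ α) ^ k / Real.Gamma (α * k + 1) with hS
        have hScont : Continuous S := by
          apply Continuous.add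
          · apply continuous_const.mul
            apply continuous_finset_sum
            intro j _
            exact ((continuous_const.mul hcontpow).pow j).div_const _
          · exact (continuous_const.mul
              ((continuous_const.mul hcontpow).pow k)).div_const _
        have hmono : (∫ τ in t0..t, (t - τ) ^ (α - 1) * u τ)
            ≤ ∫ τ in t0..t, (t - τ) ^ (α - 1) * S τ := by
          apply intervalIntegral.integral_mono_on h0.le
          · exact auxInt hα0 (hu.mono (by rw [huI]; exact hsub))
          · exact auxInt hα0 hScont.continuousOn
          · intro τ hτ
            have hfnn : 0 ≤ (t - τ) ^ (α - 1) :=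
              Real.rpow_nonneg (by linarith [hτ.2]) _
            exact mul_le_mul_of_nonneg_left (IH τ (hsub hτ)) hfnn
        have hcongr : (∫ τ in t0..t, (t - τ) ^ (α - 1) * S τ)
            = ∫ τ in t0..t, ∑ j ∈ Finset.range (k+1),
                coef j * ((t - τ) ^ (α - 1) * (τ - t0) ^ (α * j)) := by
          refine intervalIntegral.integral_congr fun τ hτ => ?_
          rw [huI] at hτ
          have hτ0 : (0:ℝ) ≤ τ - t0 := by linarith [hτ.1]
          have hpow : ∀ j : ℕ, (c * (τ - t0) ^ α) ^ j = c ^ j * (τ - t0) ^ (α * j) := by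
            intro j
            rw [mul_pow, ← Real.rpow_natCast ((τ - t0) ^ α) j, ← Real.rpow_mul hτ0]
          rw [Finset.sum_range_succ]
          have hck : coef k * ((t - τ) ^ (α - 1) * (τ - t0) ^ (α * k))
              = (t - τ) ^ (α - 1) * (M * (c * (τ - t0) ^ α) ^ k / Real.Gamma (α * k + 1)) := by
            have hceq : coef k = M * c ^ k / Real.Gamma (α * k + 1) := by simp [hcoef]
            rw [hceq, hpow k]; ring
          have hcj : ∀ j ∈ Finset.range k,
              coef j * ((t - τ) ^ (α - 1) * (τ - t0) ^ (α * j))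
              = (t - τ) ^ (α - 1) * (a * ((c * (τ - t0) ^ α) ^ j / Real.Gamma (α * j + 1))) := by
            intro j hj
            have : coef j = a * c ^ j / Real.Gamma (α * j + 1) := by
              simp [hcoef, (Finset.mem_range.mp hj).ne]
            rw [this, hpow j]; ring
          rw [Finset.sum_congr rfl hcj, hck, hS]
          simp only
          rw [mul_add, Finset.mul_sum, Finset.mul_sum]
        have hval := auxIntSum (t0 := t0) (t := t) h0 hα0 (k+1) coef
        have hcΓ : 0 ≤ c / Real.Gamma α := div_nonneg hc.le hΓα.le
        have step : u t ≤ a + (c / Real.Gamma α) * ∑ j ∈ Finset.range (k+1),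
            coef j * ((t - t0) ^ (α * ((j:ℝ) + 1))
              * (Real.Gamma α * Real.Gamma (α * j + 1) / Real.Gamma (α * ((j:ℝ) + 1) + 1))) := by
          calc u t ≤ a + (c / Real.Gamma α) * ∫ τ in t0..t, (t - τ) ^ (α - 1) * u τ :=
                hineq t htt
            _ ≤ a + (c / Real.Gamma α) * ∫ τ in t0..t, (t - τ) ^ (α - 1) * S τ := by
                have := mul_le_mul_of_nonneg_left hmono hcΓ
                linarith
            _ = _ := by rw [hcongr, hval]
        -- now rewrite RHS of step into the required form
        have ht0 : (0:ℝ) ≤ t - t0 := by linarith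
        have hpowt : ∀ j : ℕ, (c * (t - t0) ^ α) ^ j = c ^ j * (t - t0) ^ (α * j) := by
          intro j
          rw [mul_pow, ← Real.rpow_natCast ((t - t0) ^ α) j, ← Real.rpow_mul ht0]
        have hterm : ∀ (b : ℝ) (j : ℕ), (c / Real.Gamma α) *
            ((b * c ^ j / Real.Gamma (α * j + 1)) * ((t - t0) ^ (α * ((j:ℝ) + 1))
              * (Real.Gamma α * Real.Gamma (α * j + 1) / Real.Gamma (α * ((j:ℝ) + 1) + 1))))
            = b * (c * (t - t0) ^ α) ^ (j + 1) / Real.Gamma (α * ((j:ℝ) + 1) + 1) := by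
          intro b j
          have hΓj := Real.Gamma_pos_of_pos (show (0:ℝ) < α * j + 1 by positivity)
          have hc1 : ((j:ℝ) + 1) = ((j + 1 : ℕ) : ℝ) := by push_cast; ring
          rw [show (c * (t - t0) ^ α) ^ (j + 1) = c ^ (j+1) * (t - t0) ^ (α * ((j:ℝ) + 1)) by
            rw [hpowt (j+1), hc1]]
          field_simp
          ring
        have hfinal : a + (c / Real.Gamma α) * ∑ j ∈ Finset.range (k+1),
            coef j * ((t - t0) ^ (α * ((j:ℝ) + 1))
              * (Real.Gamma α * Real.Gamma (α * j + 1) / Real.Gamma (α * ((j:ℝ) + 1) + 1)))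
            = a * (∑ j ∈ Finset.range (k+1),
                (c * (t - t0) ^ α) ^ j / Real.Gamma (α * j + 1))
              + M * (c * (t - t0) ^ α) ^ (k+1) / Real.Gamma (α * (k+1 : ℕ) + 1) := by
          rw [Finset.sum_range_succ, mul_add, Finset.mul_sum]
          have e1 : ∀ j ∈ Finset.range k, (c / Real.Gamma α) *
              (coef j * ((t - t0) ^ (α * ((j:ℝ) + 1))
                * (Real.Gamma α * Real.Gamma (α * j + 1) / Real.Gamma (α * ((j:ℝ) + 1) + 1))))
              = a * ((c * (t - t0) ^ α) ^ (j + 1) / Real.Gamma (α * ((j:ℝ) + 1) + 1)) := by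
            intro j hj
            have hcj2 : coef j = a * c ^ j / Real.Gamma (α * j + 1) := by
              simp [hcoef, (Finset.mem_range.mp hj).ne]
            rw [hcj2, hterm a j, mul_div_assoc]
          have e2 : (c / Real.Gamma α) *
              (coef k * ((t - t0) ^ (α * ((k:ℝ) + 1))
                * (Real.Gamma α * Real.Gamma (α * k + 1) / Real.Gamma (α * ((k:ℝ) + 1) + 1))))
              = M * (c * (t - t0) ^ α) ^ (k+1) / Real.Gamma (α * (k+1 : ℕ) + 1) := by
            have hceq : coef k = M * c ^ k / Real.Gamma (α * k + 1) := by simp [hcoef]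
            rw [hceq, hterm M k]
            congr 2
            push_cast
            ring
          rw [Finset.sum_congr rfl e1, e2]
          have e3 : a * (∑ j ∈ Finset.range (k+1),
              (c * (t - t0) ^ α) ^ j / Real.Gamma (α * j + 1))
              = a + ∑ j ∈ Finset.range k,
                a * ((c * (t - t0) ^ α) ^ (j + 1) / Real.Gamma (α * ((j:ℝ) + 1) + 1)) := by
            rw [Finset.sum_range_succ', mul_add, Finset.mul_sum]
            have : (c * (t - t0) ^ α) ^ 0 / Real.Gamma (α * (0:ℕ) + 1) = 1 := by
              simp [Real.Gamma_one]
            rw [this, mul_one, add_comm]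
            congr 1
            refine Finset.sum_congr rfl fun j hj => ?_
            congr 2
            push_cast
            ring
          rw [e3]
          ring
        rw [← hfinal]
        exact step
  intro t htt
  have hX : 0 ≤ c * (t - t0) ^ α :=
    mul_nonneg hc.le (Real.rpow_nonneg (by linarith [htt.1]) _)
  have hsum := auxSummable hα0 hα1 hX
  have h1 : Filter.Tendsto (fun k : ℕ => a * ∑ j ∈ Finset.range k,
      (c * (t - t0) ^ α) ^ j / Real.Gamma (α * j + 1)) Filter.atTop
      (nhds (a * ML α (c * (t - t0) ^ α))) := by
    rw [ML]
    exact (hsum.hasSum.tendsto_sum_nat).const_mul a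
  have h2 : Filter.Tendsto (fun k : ℕ =>
      M * ((c * (t - t0) ^ α) ^ k / Real.Gamma (α * k + 1))) Filter.atTop (nhds 0) := by
    have := hsum.tendsto_atTop_zero.const_mul M
    simpa using this
  have h3 : Filter.Tendsto (fun k : ℕ => a * (∑ j ∈ Finset.range k,
      (c * (t - t0) ^ α) ^ j / Real.Gamma (α * j + 1))
        + M * (c * (t - t0) ^ α) ^ k / Real.Gamma (α * k + 1)) Filter.atTop
      (nhds (a * ML α (c * (t - t0) ^ α))) := by
    have := h1.add h2
    simpa [mul_div_assoc] using this
  exact ge_of_tendsto' h3 (fun k => key k t htt)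

end
end

section
/- The set of admissible positions is nonempty (for any t ∈ [t0,ϑ] and any w0 with ‖w0‖ ≤ R0, the constant function w ≡ w0 on [t0,t] gives an admissible position), and there exist constants R1, M1, H1 > 0, depending only on α, t0, ϑ, R0 and c, such that for every admissible position (t, w(·)) with Caputo derivative φ: (i) ‖w(τ)‖ ≤ R1 for all τ ∈ [t0,t]; (ii) ‖φ(τ)‖ ≤ M1 for a.e. τ ∈ [t0,t]; (iii) ‖w(τ) − w(τ′)‖ ≤ H1·|τ − τ′|^α for all τ, τ′ ∈ [t0,t]. In fact, one may take R1 = (1+R0)·E_α((ϑ−t0)^α c) − 1, where E_α(z) = ∑_{k=0}^{∞} z^k/Γ(αk+1), and M1 = (1+R1)c. -/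
open MeasureTheory Set
open scoped RealInnerProductSpace NNReal

noncomputable section

section AuxProp1
open intervalIntegral
set_option maxHeartbeats 1000000

private lemma realBeta (a b : ℝ) (ha : 0 < a) (hb : 0 < b) :
    ∫ x in (0:ℝ)..1, x ^ (a - 1) * (1 - x) ^ (b - 1) =
      Real.Gamma a * Real.Gamma b / Real.Gamma (a + b) := by
  have key := Complex.Gamma_mul_Gamma_eq_betaIntegral (s := (a:ℂ)) (t := (b:ℂ))
    (by simpa using ha) (by simpa using hb)
  have hBeta : Complex.betaIntegral a b =
      ((∫ x in (0:ℝ)..1, x ^ (a - 1) * (1 - x) ^ (b - 1) : ℝ) : ℂ) := by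
    rw [Complex.betaIntegral, ← intervalIntegral.integral_ofReal]
    apply intervalIntegral.integral_congr
    intro x hx
    rw [uIcc_of_le (by norm_num : (0:ℝ) ≤ 1)] at hx
    have h0 : (0:ℝ) ≤ x := hx.1
    have h1 : (0:ℝ) ≤ 1 - x := by linarith [hx.2]
    push_cast
    rw [Complex.ofReal_cpow h0, Complex.ofReal_cpow h1]
    push_cast
    ring
  have hG : Complex.Gamma (a + b : ℝ) = (Real.Gamma (a+b) : ℂ) := Complex.Gamma_ofReal _
  rw [Complex.Gamma_ofReal, Complex.Gamma_ofReal, ← Complex.ofReal_add, hG, hBeta] at key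
  have hne : Real.Gamma (a + b) ≠ 0 := (Real.Gamma_pos_of_pos (by linarith)).ne'
  have := congrArg Complex.re key
  simp at this
  field_simp
  linarith [this]

private lemma beta_conv (t0 τ α β : ℝ) (hτ : t0 ≤ τ) (hα : 0 < α) (hβ : 0 ≤ β) :
    ∫ s in t0..τ, (τ - s) ^ (α - 1) * (s - t0) ^ β =
      Real.Gamma (β + 1) * Real.Gamma α / Real.Gamma (β + 1 + α) * (τ - t0) ^ (α + β) := by
  rcases eq_or_lt_of_le hτ with rfl | hlt
  · simp [Real.zero_rpow (by positivity : α + β ≠ 0)]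
  set c := τ - t0 with hc
  have hcpos : 0 < c := by simp [hc]; linarith
  have hsub := intervalIntegral.integral_comp_mul_add
    (f := fun s => (τ - s) ^ (α - 1) * (s - t0) ^ β) (a := (0:ℝ)) (b := 1) hcpos.ne' t0
  rw [mul_zero, zero_add, mul_one] at hsub
  have hτ' : c + t0 = τ := by rw [hc]; ring
  rw [hτ'] at hsub
  have hcongr : ∫ x in (0:ℝ)..1, (τ - (c * x + t0)) ^ (α - 1) * (c * x + t0 - t0) ^ β
      = ∫ x in (0:ℝ)..1, (c ^ (α - 1) * c ^ β) * ((1 - x) ^ (α - 1) * x ^ β) := by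
    apply intervalIntegral.integral_congr
    intro x hx
    rw [uIcc_of_le (by norm_num : (0:ℝ) ≤ 1)] at hx
    have h1 : τ - (c * x + t0) = c * (1 - x) := by rw [hc]; ring
    have h2 : c * x + t0 - t0 = c * x := by ring
    dsimp only
    rw [h1, h2, Real.mul_rpow hcpos.le (by linarith [hx.2]), Real.mul_rpow hcpos.le hx.1]
    ring
  rw [hcongr, intervalIntegral.integral_const_mul] at hsub
  have hbeta : ∫ x in (0:ℝ)..1, (1 - x) ^ (α - 1) * x ^ β
      = Real.Gamma (β + 1) * Real.Gamma α / Real.Gamma (β + 1 + α) := by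
    have := realBeta (β + 1) α (by linarith) hα
    rw [← this]
    apply intervalIntegral.integral_congr
    intro x hx
    rw [add_sub_cancel_right]
    ring
  rw [hbeta, smul_eq_mul, ← div_eq_inv_mul, eq_comm, div_eq_iff hcpos.ne'] at hsub
  rw [hsub]
  have hpow : c ^ (α - 1) * c ^ β * c = c ^ (α + β) := by
    rw [← Real.rpow_add hcpos, ← Real.rpow_add_one hcpos.ne']
    congr 1; ring
  calc c ^ (α - 1) * c ^ β * (Real.Gamma (β + 1) * Real.Gamma α / Real.Gamma (β + 1 + α)) * c
      = (c ^ (α - 1) * c ^ β * c) * (Real.Gamma (β + 1) * Real.Gamma α / Real.Gamma (β + 1 + α)) := by ring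
    _ = _ := by rw [hpow]; ring

private lemma ML_summable (α : ℝ) (hα : 0 < α) (z : ℝ) (hz : 0 ≤ z) :
    Summable (fun k : ℕ => z ^ k / Real.Gamma (α * k + 1)) := by
  set w : ℝ := max z 1 with hwdef
  have hw1 : 1 ≤ w := le_max_right _ _
  have hzw : z ≤ w := le_max_left _ _
  set K : ℕ := ⌈2 / α⌉₊ with hK
  set x : ℝ := (2 * w) ^ K with hx
  have h2w : (1:ℝ) ≤ 2 * w := by linarith
  -- eventually m! ≥ x^m
  have hev : ∀ᶠ m : ℕ in Filter.atTop, x ^ m / ((Nat.factorial m : ℕ) : ℝ) ≤ 1 := by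
    have := (Real.summable_pow_div_factorial x).tendsto_atTop_zero
    exact this.eventually_le_const (by norm_num : (0:ℝ) < 1)
  obtain ⟨M, hM⟩ := Filter.eventually_atTop.mp hev
  -- choose N₀ with α * N₀ ≥ M + 2
  obtain ⟨N₀, hN₀⟩ := exists_nat_ge (((M:ℝ) + 2) / α)
  have key : ∀ k : ℕ, N₀ ≤ k → z ^ k / Real.Gamma (α * k + 1) ≤ (1/2) ^ k := by
    intro k hk
    have hαk : (M:ℝ) + 2 ≤ α * k := by
      rw [div_le_iff₀ hα] at hN₀
      calc (M:ℝ) + 2 ≤ α * N₀ := by linarith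
        _ ≤ α * k := by
          apply mul_le_mul_of_nonneg_left (by exact_mod_cast hk) hα.le
    set m : ℕ := ⌊α * k⌋₊ with hm
    have hαk0 : (0:ℝ) ≤ α * k := by positivity
    have hfl : (m:ℝ) ≤ α * k := Nat.floor_le hαk0
    have hfl2 : α * k < m + 1 := Nat.lt_floor_add_one _
    have hmM : (M:ℝ) + 1 ≤ m := by linarith
    have hmM' : M ≤ m := by exact_mod_cast le_trans (by linarith : (M:ℝ) ≤ (M:ℝ)+1) hmM
    have hm1 : 1 ≤ m := by
      have : (1:ℝ) ≤ m := by linarith [Nat.cast_nonneg (α := ℝ) M]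
      exact_mod_cast this
    -- Gamma bound
    have hGmono : Real.Gamma ((m:ℝ) + 1) ≤ Real.Gamma (α * k + 1) := by
      rcases eq_or_lt_of_le (by linarith : (m:ℝ) + 1 ≤ α * k + 1) with h | h
      · rw [h]
      · have hm1' : (1:ℝ) ≤ (m:ℝ) := Nat.one_le_cast.mpr hm1
        exact le_of_lt (Real.Gamma_strictMonoOn_Ici
          (by simp only [mem_Ici]; linarith) (by simp only [mem_Ici]; linarith) h)
    rw [Real.Gamma_nat_eq_factorial] at hGmono
    -- factorial bound
    have hfac : x ^ m ≤ ((Nat.factorial m : ℕ) : ℝ) := by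
      have := hM m hmM'
      rw [div_le_one (by positivity)] at this
      exact this
    -- x^m ≥ (2w)^k
    have hKm : k ≤ K * m := by
      have hKge : (2:ℝ) / α ≤ K := Nat.le_ceil _
      have h1 : (k:ℝ) ≤ (K:ℝ) * m := by
        have hm2 : α * k / 2 ≤ (m:ℝ) := by linarith
        have : (k:ℝ) = (2/α) * (α * k / 2) := by field_simp
        rw [this]
        apply mul_le_mul hKge hm2 (by positivity) (Nat.cast_nonneg _)
      exact_mod_cast (by push_cast at h1 ⊢; exact h1 : (k:ℝ) ≤ ((K * m : ℕ) : ℝ))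
    have hx2w : (2*w) ^ k ≤ x ^ m := by
      rw [hx, ← pow_mul]
      exact pow_le_pow_right₀ h2w hKm
    have hGk : (2*w) ^ k ≤ Real.Gamma (α * k + 1) :=
      le_trans hx2w (le_trans hfac hGmono)
    have hGpos : 0 < Real.Gamma (α * k + 1) := Real.Gamma_pos_of_pos (by positivity)
    have hzk : z ^ k ≤ w ^ k := pow_le_pow_left₀ hz hzw k
    calc z ^ k / Real.Gamma (α * k + 1) ≤ w ^ k / (2*w) ^ k := by
          apply div_le_div₀ (by positivity) hzk (by positivity) hGk
      _ = (1/2) ^ k := by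
          rw [mul_pow, div_eq_iff (by positivity), div_pow]
          field_simp
          simp
  -- conclude summability
  apply (summable_nat_add_iff N₀).mp
  apply Summable.of_nonneg_of_le (fun k => by positivity)
    (fun k => le_trans (key (k + N₀) (by omega)) (by
      apply pow_le_pow_of_le_one (by norm_num) (by norm_num)
      exact Nat.le_add_right _ _))
  exact summable_geometric_of_lt_one (by norm_num) (by norm_num)

private lemma intInt_rpow_sub (τ r a b : ℝ) (hr : -1 < r) :
    IntervalIntegrable (fun s => (τ - s) ^ r) volume a b := by
  have h := (intervalIntegrable_rpow' (a := τ - a) (b := τ - b) hr).comp_sub_left τ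
  simpa using h

private lemma intInt_smul_phi {n : ℕ} (F : ℝ → ℝ) (φ : ℝ → Evec n) (a b K : ℝ)
    (hF : IntervalIntegrable F volume a b) (hφ : Measurable φ)
    (hbd : ∀ᵐ s ∂volume.restrict (Set.uIoc a b), ‖φ s‖ ≤ K) :
    IntervalIntegrable (fun s => F s • φ s) volume a b := by
  apply IntervalIntegrable.mono_fun ((hF.abs).mul_const K)
  · exact (hF.def'.aestronglyMeasurable).smul (hφ.aestronglyMeasurable.restrict)
  · filter_upwards [hbd] with s hs
    simp only [norm_smul, Real.norm_eq_abs]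
    calc |F s| * ‖φ s‖ ≤ |F s| * K := by
          apply mul_le_mul_of_nonneg_left hs (abs_nonneg _)
      _ ≤ |(|F s| * K)| := le_abs_self _

private lemma cont_mono_rpow (t0 q : ℝ) (hq : 0 ≤ q) : Continuous fun s : ℝ => (s - t0) ^ q := by
  have h1 : Continuous fun x : ℝ => x ^ q := by
    rw [continuous_iff_continuousAt]
    exact fun x => Real.continuousAt_rpow_const x q (Or.inr hq)
  exact h1.comp (continuous_id.sub continuous_const)

private lemma gronwall_bound (t0 t ϑ α c : ℝ) (hα : α ∈ Ioo (0:ℝ) 1) (hc : 0 < c)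
    (ht : t0 ≤ t) (htϑ : t ≤ ϑ)
    {n : ℕ} (w φ : ℝ → Evec n)
    (hw : ContinuousOn w (Icc t0 t))
    (hφm : Measurable φ)
    (hRL : ∀ τ ∈ Icc t0 t, w τ = w t0 + RL t0 α φ τ)
    (hφb : ∀ᵐ τ ∂(volume.restrict (Icc t0 t)), ‖φ τ‖ ≤ (1 + ‖w τ‖) * c)
    (A : ℝ) (hA : 1 + ‖w t0‖ ≤ A) :
    ∀ τ ∈ Icc t0 t, 1 + ‖w τ‖ ≤ A * ML α ((ϑ - t0) ^ α * c) := by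
  obtain ⟨hα0, hα1⟩ := hα
  have hΓα : 0 < Real.Gamma α := Real.Gamma_pos_of_pos hα0
  -- bound on w
  obtain ⟨B0, hB0⟩ := (isCompact_Icc (a := t0) (b := t)).exists_bound_of_continuousOn hw
  set Bg : ℝ := max (1 + B0) 1 with hBgdef
  have hBg1 : 1 ≤ Bg := le_max_right _ _
  have hgB : ∀ s ∈ Icc t0 t, 1 + ‖w s‖ ≤ Bg :=
    fun s hs => le_trans (by linarith [hB0 s hs]) (le_max_left _ _)
  have hA1 : 1 ≤ A := le_trans (by linarith [norm_nonneg (w t0)]) hA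
  -- a.e. bound on φ by constant
  have hφK : ∀ᵐ s ∂(volume.restrict (Icc t0 t)), ‖φ s‖ ≤ Bg * c := by
    filter_upwards [hφb, ae_restrict_mem measurableSet_Icc] with s h1 h2
    exact le_trans h1 (mul_le_mul_of_nonneg_right (hgB s h2) hc.le)
  -- the monomial terms
  set T : ℕ → ℝ → ℝ := fun k τ => c ^ k * (τ - t0) ^ (α * k) / Real.Gamma (α * k + 1)
    with hTdef
  have hTcont : ∀ k, Continuous (T k) := by
    intro k
    apply Continuous.div_const
    exact continuous_const.mul (cont_mono_rpow t0 (α * k) (by positivity))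
  have hT0 : ∀ τ, T 0 τ = 1 := by
    intro τ
    simp [hTdef, Real.Gamma_one]
  have hαm1 : (-1:ℝ) < α - 1 := by linarith
  -- base integral inequality
  have base : ∀ τ ∈ Icc t0 t, 1 + ‖w τ‖ ≤ A + (c / Real.Gamma α) *
      ∫ s in t0..τ, (τ - s) ^ (α - 1) * (1 + ‖w s‖) := by
    intro τ hτ
    have hτ1 : t0 ≤ τ := hτ.1
    have hIcc : Icc t0 τ ⊆ Icc t0 t := Icc_subset_Icc le_rfl hτ.2
    have hΙ : Set.uIoc t0 τ ⊆ Icc t0 t := by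
      rw [Set.uIoc_of_le hτ1]; exact Ioc_subset_Icc_self.trans hIcc
    have hφKΙ : ∀ᵐ s ∂volume.restrict (Set.uIoc t0 τ), ‖φ s‖ ≤ Bg * c :=
      ae_restrict_of_ae_restrict_of_subset hΙ hφK
    have iφ : IntervalIntegrable (fun s => ((τ - s) ^ (α - 1)) • φ s) volume t0 τ :=
      intInt_smul_phi _ _ _ _ _ (intInt_rpow_sub τ (α-1) t0 τ hαm1) hφm hφKΙ
    have ig : IntervalIntegrable (fun s => (τ - s) ^ (α - 1) * ((1 + ‖w s‖) * c)) volume t0 τ := by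
      apply (intInt_rpow_sub τ (α-1) t0 τ hαm1).mul_continuousOn
      rw [uIcc_of_le hτ1]
      exact (continuousOn_const.add (hw.mono hIcc).norm).mul continuousOn_const
    have h1 : ‖RL t0 α φ τ‖ ≤ (1 / Real.Gamma α) *
        ∫ s in t0..τ, (τ - s) ^ (α - 1) * ((1 + ‖w s‖) * c) := by
      rw [RL, norm_smul]
      have hn : ‖(1 / Real.Gamma α : ℝ)‖ = 1 / Real.Gamma α := by
        rw [Real.norm_eq_abs, abs_of_pos (by positivity)]
      rw [hn]
      apply mul_le_mul_of_nonneg_left ?_ (by positivity)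
      calc ‖∫ s in t0..τ, ((τ - s) ^ (α - 1)) • φ s‖
          ≤ |∫ s in t0..τ, ‖((τ - s) ^ (α - 1)) • φ s‖| :=
            intervalIntegral.norm_integral_le_abs_integral_norm
        _ = ∫ s in t0..τ, ‖((τ - s) ^ (α - 1)) • φ s‖ := by
            rw [abs_of_nonneg]
            apply intervalIntegral.integral_nonneg hτ1
            intro s _; positivity
        _ ≤ ∫ s in t0..τ, (τ - s) ^ (α - 1) * ((1 + ‖w s‖) * c) := by
            apply intervalIntegral.integral_mono_ae_restrict hτ1 iφ.norm ig
            filter_upwards [ae_restrict_of_ae_restrict_of_subset hIcc hφb,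
              ae_restrict_mem measurableSet_Icc] with s hs1 hs2
            rw [norm_smul, Real.norm_eq_abs,
              abs_of_nonneg (Real.rpow_nonneg (by linarith [hs2.2]) _)]
            exact mul_le_mul_of_nonneg_left hs1 (Real.rpow_nonneg (by linarith [hs2.2]) _)
    have hwτ := hRL τ hτ
    have hconst : (1 / Real.Gamma α) * (∫ s in t0..τ, (τ - s) ^ (α - 1) * ((1 + ‖w s‖) * c))
        = (c / Real.Gamma α) * ∫ s in t0..τ, (τ - s) ^ (α - 1) * (1 + ‖w s‖) := by
      have e : ∀ s : ℝ, (τ - s) ^ (α - 1) * ((1 + ‖w s‖) * c)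
          = c * ((τ - s) ^ (α - 1) * (1 + ‖w s‖)) := fun s => by ring
      simp only [e]
      rw [intervalIntegral.integral_const_mul]
      ring
    calc 1 + ‖w τ‖ = 1 + ‖w t0 + RL t0 α φ τ‖ := by rw [← hwτ]
      _ ≤ 1 + ‖w t0‖ + ‖RL t0 α φ τ‖ := by
          have := norm_add_le (w t0) (RL t0 α φ τ); linarith
      _ ≤ A + (c / Real.Gamma α) * ∫ s in t0..τ, (τ - s) ^ (α - 1) * (1 + ‖w s‖) := by
          rw [← hconst]; linarith
  -- key step: fractional integral of monomial
  have step_int : ∀ τ, t0 ≤ τ → ∀ k : ℕ,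
      (c / Real.Gamma α) * ∫ s in t0..τ, (τ - s) ^ (α - 1) * T k s = T (k+1) τ := by
    intro τ hτ k
    have hβ : (0:ℝ) ≤ α * k := by positivity
    have e1 : ∀ s : ℝ, (τ - s) ^ (α - 1) * T k s
        = (c ^ k / Real.Gamma (α * k + 1)) * ((τ - s) ^ (α - 1) * (s - t0) ^ (α * k)) := by
      intro s; simp only [hTdef]; ring
    simp only [e1]
    rw [intervalIntegral.integral_const_mul, beta_conv t0 τ α (α * k) hτ hα0 hβ]
    have hΓk : (0:ℝ) < Real.Gamma (α * k + 1) := Real.Gamma_pos_of_pos (by positivity)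
    have hΓk1 : (0:ℝ) < Real.Gamma (α * (k+1) + 1) := Real.Gamma_pos_of_pos (by positivity)
    have he2 : α * k + 1 + α = α * (k+1) + 1 := by ring
    have he3 : α + α * k = α * (k+1) := by ring
    rw [he2, he3]
    simp only [hTdef]
    push_cast
    rw [pow_succ]
    field_simp
  -- induction
  have ind : ∀ N : ℕ, ∀ τ ∈ Icc t0 t,
      1 + ‖w τ‖ ≤ A * ∑ k ∈ Finset.range N, T k τ + Bg * T N τ := by
    intro N
    induction N with
    | zero =>
      intro τ hτ
      simpa [hT0] using hgB τ hτ
    | succ N ih =>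
      intro τ hτ
      have hτ1 : t0 ≤ τ := hτ.1
      have hIcc : Icc t0 τ ⊆ Icc t0 t := Icc_subset_Icc le_rfl hτ.2
      have ig : IntervalIntegrable (fun s => (τ - s) ^ (α - 1) * (1 + ‖w s‖)) volume t0 τ := by
        apply (intInt_rpow_sub τ (α-1) t0 τ hαm1).mul_continuousOn
        rw [uIcc_of_le hτ1]
        exact continuousOn_const.add (hw.mono hIcc).norm
      have iT : ∀ k : ℕ, IntervalIntegrable (fun s => (τ - s) ^ (α - 1) * T k s) volume t0 τ :=
        fun k => (intInt_rpow_sub τ (α-1) t0 τ hαm1).mul_continuousOn (hTcont k).continuousOn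
      set F : ℝ → ℝ := fun s => A * ∑ k ∈ Finset.range N, T k s + Bg * T N s with hF
      have h1 : ∀ s : ℝ, (τ - s) ^ (α - 1) * F s
          = (∑ k ∈ Finset.range N, A * ((τ - s) ^ (α - 1) * T k s))
            + Bg * ((τ - s) ^ (α - 1) * T N s) := by
        intro s
        simp only [hF, Finset.mul_sum]
        rw [mul_add]
        congr 1
        · rw [Finset.mul_sum]
          exact Finset.sum_congr rfl fun k _ => by ring
        · ring
      have hmono : (∫ s in t0..τ, (τ - s) ^ (α - 1) * (1 + ‖w s‖))
          ≤ ∫ s in t0..τ, (τ - s) ^ (α - 1) * F s := by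
        apply intervalIntegral.integral_mono_on hτ1 ig
        · apply (intInt_rpow_sub τ (α-1) t0 τ hαm1).mul_continuousOn
          apply Continuous.continuousOn
          apply Continuous.add
          · exact continuous_const.mul (continuous_finset_sum _ fun k _ => hTcont k)
          · exact continuous_const.mul (hTcont N)
        · intro s hs
          exact mul_le_mul_of_nonneg_left (ih s (hIcc hs))
            (Real.rpow_nonneg (by linarith [hs.2]) _)
      have hsplit : (∫ s in t0..τ, (τ - s) ^ (α - 1) * F s)
          = (∑ k ∈ Finset.range N, A * ∫ s in t0..τ, (τ - s) ^ (α - 1) * T k s)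
            + Bg * ∫ s in t0..τ, (τ - s) ^ (α - 1) * T N s := by
        have iSum : IntervalIntegrable
            (fun s => ∑ k ∈ Finset.range N, A * ((τ - s) ^ (α - 1) * T k s)) volume t0 τ := by
          have := IntervalIntegrable.sum (μ := volume) (Finset.range N)
            (f := fun (k : ℕ) (s : ℝ) => A * ((τ - s) ^ (α - 1) * T k s))
            (fun k _ => ((iT k).const_mul A))
          rw [Finset.sum_fn] at this
          exact this
        simp only [h1]
        rw [intervalIntegral.integral_add iSum ((iT N).const_mul Bg),
          intervalIntegral.integral_finset_sum (fun k _ => ((iT k).const_mul A))]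
        simp only [intervalIntegral.integral_const_mul]
      have hΓαne : Real.Gamma α ≠ 0 := hΓα.ne'
      calc 1 + ‖w τ‖ ≤ A + (c / Real.Gamma α) * ∫ s in t0..τ, (τ - s) ^ (α - 1) * (1 + ‖w s‖) :=
            base τ hτ
        _ ≤ A + (c / Real.Gamma α) * ∫ s in t0..τ, (τ - s) ^ (α - 1) * F s := by
            have : (0:ℝ) ≤ c / Real.Gamma α := by positivity
            nlinarith [mul_le_mul_of_nonneg_left hmono this]
        _ = A + ((∑ k ∈ Finset.range N, A * ((c / Real.Gamma α) *
              ∫ s in t0..τ, (τ - s) ^ (α - 1) * T k s))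
            + Bg * ((c / Real.Gamma α) * ∫ s in t0..τ, (τ - s) ^ (α - 1) * T N s)) := by
            rw [hsplit]
            congr 1
            rw [mul_add, Finset.mul_sum]
            congr 1
            · exact Finset.sum_congr rfl fun k _ => by ring
            · ring
        _ = A + ((∑ k ∈ Finset.range N, A * T (k+1) τ) + Bg * T (N+1) τ) := by
            congr 1
            congr 1
            · exact Finset.sum_congr rfl fun k _ => by rw [step_int τ hτ1 k]
            · rw [step_int τ hτ1 N]
        _ = A * ∑ k ∈ Finset.range (N+1), T k τ + Bg * T (N+1) τ := by
            rw [Finset.sum_range_succ', hT0, mul_add, Finset.mul_sum]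
            ring
  -- pass to the limit
  intro τ hτ
  set z : ℝ := (ϑ - t0) ^ α * c with hzdef
  have hϑt0 : (0:ℝ) ≤ ϑ - t0 := by linarith
  have hz0 : 0 ≤ z := by positivity
  have hsum := ML_summable α hα0 z hz0
  have hTz : ∀ k : ℕ, T k τ ≤ z ^ k / Real.Gamma (α * k + 1) := by
    intro k
    have hb : (0:ℝ) ≤ τ - t0 := by linarith [hτ.1]
    have h1 : (τ - t0) ^ (α * (k:ℝ)) ≤ (ϑ - t0) ^ (α * (k:ℝ)) :=
      Real.rpow_le_rpow hb (by linarith [hτ.2]) (by positivity)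
    have h2 : c ^ k * (ϑ - t0) ^ (α * (k:ℝ)) = z ^ k := by
      rw [hzdef, mul_pow, Real.rpow_mul hϑt0, Real.rpow_natCast]
      ring
    have hΓk : (0:ℝ) < Real.Gamma (α * k + 1) := Real.Gamma_pos_of_pos (by positivity)
    simp only [hTdef]
    rw [div_le_div_iff₀ hΓk hΓk]
    have : c ^ k * (τ - t0) ^ (α * (k:ℝ)) ≤ z ^ k := by
      rw [← h2]
      exact mul_le_mul_of_nonneg_left h1 (by positivity)
    nlinarith
  have hfin : ∀ N : ℕ, 1 + ‖w τ‖ ≤ A * (∑ k ∈ Finset.range N, z ^ k / Real.Gamma (α * k + 1))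
      + Bg * (z ^ N / Real.Gamma (α * N + 1)) := by
    intro N
    refine le_trans (ind N τ hτ) ?_
    have hA0 : (0:ℝ) ≤ A := by linarith
    have hBg0 : (0:ℝ) ≤ Bg := by linarith
    gcongr with k hk
    exacts [hTz k, hTz N]
  have hlim : Filter.Tendsto (fun N : ℕ =>
      A * (∑ k ∈ Finset.range N, z ^ k / Real.Gamma (α * k + 1))
      + Bg * (z ^ N / Real.Gamma (α * N + 1))) Filter.atTop
      (nhds (A * ML α z + Bg * 0)) := by
    apply Filter.Tendsto.add
    · exact (hsum.hasSum.tendsto_sum_nat).const_mul A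
    · exact (hsum.tendsto_atTop_zero).const_mul Bg
  have := ge_of_tendsto hlim (Filter.Eventually.of_forall hfin)
  simpa using this

private lemma int_rpow_eval (a b τ α : ℝ) (hα : 0 < α) (hα1 : α < 1) :
    ∫ s in a..b, (τ - s) ^ (α - 1) = ((τ - a) ^ α - (τ - b) ^ α) / α := by
  have h := intervalIntegral.integral_comp_sub_left (a := a) (b := b)
    (fun x => x ^ (α - 1)) τ
  rw [h, integral_rpow (Or.inl (by linarith))]
  have : α - 1 + 1 = α := by ring
  rw [this]

private lemma holder_bound (t0 t α : ℝ) (hα0 : 0 < α) (hα1 : α < 1)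
    {n : ℕ} (φ : ℝ → Evec n) (hφm : Measurable φ) (M : ℝ) (hM : 0 ≤ M)
    (hφM : ∀ᵐ s ∂(volume.restrict (Icc t0 t)), ‖φ s‖ ≤ M)
    (τ' τ : ℝ) (h1 : t0 ≤ τ') (h2 : τ' ≤ τ) (h3 : τ ≤ t) :
    ‖RL t0 α φ τ - RL t0 α φ τ'‖ ≤ (2 * M / Real.Gamma (α + 1)) * (τ - τ') ^ α := by
  have hΓα : 0 < Real.Gamma α := Real.Gamma_pos_of_pos hα0
  have hαm1 : (-1:ℝ) < α - 1 := by linarith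
  have hγ : α - 1 ≤ 0 := by linarith
  have hI1 : Set.uIoc t0 τ' ⊆ Icc t0 t := by
    rw [Set.uIoc_of_le h1]
    exact Ioc_subset_Icc_self.trans (Icc_subset_Icc le_rfl (by linarith))
  have hI2 : Set.uIoc τ' τ ⊆ Icc t0 t := by
    rw [Set.uIoc_of_le h2]
    exact Ioc_subset_Icc_self.trans (Icc_subset_Icc h1 h3)
  have hφ1 := ae_restrict_of_ae_restrict_of_subset hI1 hφM
  have hφ2 := ae_restrict_of_ae_restrict_of_subset hI2 hφM
  -- integrabilities
  have iφτa : IntervalIntegrable (fun s => ((τ - s) ^ (α - 1)) • φ s) volume t0 τ' :=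
    intInt_smul_phi _ _ _ _ _ (intInt_rpow_sub τ (α-1) t0 τ' hαm1) hφm hφ1
  have iφτb : IntervalIntegrable (fun s => ((τ - s) ^ (α - 1)) • φ s) volume τ' τ :=
    intInt_smul_phi _ _ _ _ _ (intInt_rpow_sub τ (α-1) τ' τ hαm1) hφm hφ2
  have iφτ' : IntervalIntegrable (fun s => ((τ' - s) ^ (α - 1)) • φ s) volume t0 τ' :=
    intInt_smul_phi _ _ _ _ _ (intInt_rpow_sub τ' (α-1) t0 τ' hαm1) hφm hφ1
  have iFdiff : IntervalIntegrable (fun s => (τ - s) ^ (α - 1) - (τ' - s) ^ (α - 1))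
      volume t0 τ' :=
    (intInt_rpow_sub τ (α-1) t0 τ' hαm1).sub (intInt_rpow_sub τ' (α-1) t0 τ' hαm1)
  have iX : IntervalIntegrable
      (fun s => ((τ - s) ^ (α - 1) - (τ' - s) ^ (α - 1)) • φ s) volume t0 τ' :=
    intInt_smul_phi _ _ _ _ _ iFdiff hφm hφ1
  -- decomposition
  have hdecomp : RL t0 α φ τ - RL t0 α φ τ' = (1 / Real.Gamma α) •
      ((∫ s in t0..τ', ((τ - s) ^ (α - 1) - (τ' - s) ^ (α - 1)) • φ s)
        + ∫ s in τ'..τ, ((τ - s) ^ (α - 1)) • φ s) := by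
    rw [RL, RL, ← smul_sub]
    congr 1
    rw [← intervalIntegral.integral_add_adjacent_intervals iφτa iφτb]
    have e : ∀ s : ℝ, ((τ - s) ^ (α - 1) - (τ' - s) ^ (α - 1)) • φ s
        = ((τ - s) ^ (α - 1)) • φ s - ((τ' - s) ^ (α - 1)) • φ s := fun s => sub_smul _ _ _
    simp only [e]
    rw [intervalIntegral.integral_sub iφτa iφτ']
    abel
  -- a.e. s ≠ τ'
  have hne : ∀ᵐ s ∂(volume : Measure ℝ), s ≠ τ' := by
    rw [ae_iff]
    have : {s : ℝ | ¬ s ≠ τ'} = {τ'} := by ext s; simp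
    rw [this]
    exact measure_singleton τ'
  -- bound on X
  have hXb : ‖∫ s in t0..τ', ((τ - s) ^ (α - 1) - (τ' - s) ^ (α - 1)) • φ s‖
      ≤ ∫ s in t0..τ', ((τ' - s) ^ (α - 1) - (τ - s) ^ (α - 1)) * M := by
    calc ‖∫ s in t0..τ', ((τ - s) ^ (α - 1) - (τ' - s) ^ (α - 1)) • φ s‖
        ≤ |∫ s in t0..τ', ‖((τ - s) ^ (α - 1) - (τ' - s) ^ (α - 1)) • φ s‖| :=
          intervalIntegral.norm_integral_le_abs_integral_norm
      _ = ∫ s in t0..τ', ‖((τ - s) ^ (α - 1) - (τ' - s) ^ (α - 1)) • φ s‖ := by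
          rw [abs_of_nonneg (intervalIntegral.integral_nonneg h1 (fun s _ => norm_nonneg _))]
      _ ≤ ∫ s in t0..τ', ((τ' - s) ^ (α - 1) - (τ - s) ^ (α - 1)) * M := by
          apply intervalIntegral.integral_mono_ae_restrict h1 iX.norm
            (((intInt_rpow_sub τ' (α-1) t0 τ' hαm1).sub
              (intInt_rpow_sub τ (α-1) t0 τ' hαm1)).mul_const M)
          filter_upwards [ae_restrict_of_ae_restrict_of_subset
              (Icc_subset_Icc le_rfl (by linarith : τ' ≤ t)) hφM,
            ae_restrict_mem measurableSet_Icc, ae_restrict_of_ae hne] with s hs1 hs2 hs3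
          have hsτ' : s < τ' := lt_of_le_of_ne hs2.2 hs3
          have hmono : (τ - s) ^ (α - 1) ≤ (τ' - s) ^ (α - 1) :=
            Real.rpow_le_rpow_of_nonpos (by linarith) (by linarith) hγ
          rw [norm_smul, Real.norm_eq_abs, abs_of_nonpos (by linarith), neg_sub]
          exact mul_le_mul (le_refl _) hs1 (norm_nonneg _) (by linarith)
  -- bound on Y
  have hYb : ‖∫ s in τ'..τ, ((τ - s) ^ (α - 1)) • φ s‖
      ≤ ∫ s in τ'..τ, (τ - s) ^ (α - 1) * M := by
    calc ‖∫ s in τ'..τ, ((τ - s) ^ (α - 1)) • φ s‖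
        ≤ |∫ s in τ'..τ, ‖((τ - s) ^ (α - 1)) • φ s‖| :=
          intervalIntegral.norm_integral_le_abs_integral_norm
      _ = ∫ s in τ'..τ, ‖((τ - s) ^ (α - 1)) • φ s‖ := by
          rw [abs_of_nonneg (intervalIntegral.integral_nonneg h2 (fun s _ => norm_nonneg _))]
      _ ≤ ∫ s in τ'..τ, (τ - s) ^ (α - 1) * M := by
          apply intervalIntegral.integral_mono_ae_restrict h2 iφτb.norm
            ((intInt_rpow_sub τ (α-1) τ' τ hαm1).mul_const M)
          filter_upwards [ae_restrict_of_ae_restrict_of_subset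
              (Icc_subset_Icc h1 h3) hφM,
            ae_restrict_mem measurableSet_Icc] with s hs1 hs2
          rw [norm_smul, Real.norm_eq_abs,
            abs_of_nonneg (Real.rpow_nonneg (by linarith [hs2.2]) _)]
          exact mul_le_mul_of_nonneg_left hs1 (Real.rpow_nonneg (by linarith [hs2.2]) _)
  -- evaluate the integrals
  have hzero : (0:ℝ) ^ α = 0 := Real.zero_rpow hα0.ne'
  have evalY : ∫ s in τ'..τ, (τ - s) ^ (α - 1) * M = M * ((τ - τ') ^ α) / α := by
    rw [intervalIntegral.integral_mul_const, int_rpow_eval τ' τ τ α hα0 hα1]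
    rw [sub_self, hzero]
    ring
  have evalX : ∫ s in t0..τ', ((τ' - s) ^ (α - 1) - (τ - s) ^ (α - 1)) * M
      = M * ((τ' - t0) ^ α - ((τ - t0) ^ α - (τ - τ') ^ α)) / α := by
    rw [intervalIntegral.integral_mul_const,
      intervalIntegral.integral_sub (intInt_rpow_sub τ' (α-1) t0 τ' hαm1)
        (intInt_rpow_sub τ (α-1) t0 τ' hαm1),
      int_rpow_eval t0 τ' τ' α hα0 hα1, int_rpow_eval t0 τ' τ α hα0 hα1]
    rw [sub_self, hzero]
    ring
  -- final assembly
  have hΓ1 : Real.Gamma (α + 1) = α * Real.Gamma α := Real.Gamma_add_one hα0.ne'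
  have hmono2 : (τ' - t0) ^ α ≤ (τ - t0) ^ α :=
    Real.rpow_le_rpow (by linarith) (by linarith) hα0.le
  have hXY : ‖RL t0 α φ τ - RL t0 α φ τ'‖ ≤ (1 / Real.Gamma α) *
      (M * ((τ' - t0) ^ α - ((τ - t0) ^ α - (τ - τ') ^ α)) / α + M * ((τ - τ') ^ α) / α) := by
    rw [hdecomp, norm_smul, Real.norm_eq_abs, abs_of_pos (by positivity)]
    apply mul_le_mul_of_nonneg_left ?_ (by positivity)
    calc ‖(∫ s in t0..τ', ((τ - s) ^ (α - 1) - (τ' - s) ^ (α - 1)) • φ s)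
          + ∫ s in τ'..τ, ((τ - s) ^ (α - 1)) • φ s‖
        ≤ ‖∫ s in t0..τ', ((τ - s) ^ (α - 1) - (τ' - s) ^ (α - 1)) • φ s‖
          + ‖∫ s in τ'..τ, ((τ - s) ^ (α - 1)) • φ s‖ := norm_add_le _ _
      _ ≤ _ := by
          rw [← evalX, ← evalY]
          exact add_le_add hXb hYb
  refine le_trans hXY ?_
  have key : M * ((τ' - t0) ^ α - ((τ - t0) ^ α - (τ - τ') ^ α)) / α + M * ((τ - τ') ^ α) / α
      ≤ 2 * M * (τ - τ') ^ α / α := by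
    rw [← add_div]
    gcongr
    nlinarith [mul_le_mul_of_nonneg_left hmono2 hM]
  calc (1 / Real.Gamma α) *
        (M * ((τ' - t0) ^ α - ((τ - t0) ^ α - (τ - τ') ^ α)) / α + M * ((τ - τ') ^ α) / α)
      ≤ (1 / Real.Gamma α) * (2 * M * (τ - τ') ^ α / α) :=
        mul_le_mul_of_nonneg_left key (by positivity)
    _ = (2 * M / Real.Gamma (α + 1)) * (τ - τ') ^ α := by
        rw [hΓ1]
        field_simp

end AuxProp1

/-- Proposition 1: the set of admissible positions is nonempty, and there are
constants `R1, M1, H1 > 0` (with `R1 = (1+R0) E_α((ϑ-t0)^α c) - 1` and `M1 = (1+R1)c`)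
bounding every admissible position, its Caputo derivative, and its Hölder constant. -/
theorem admissible_positions_properties
    (t0 ϑ : ℝ) (hT : t0 < ϑ) (n : ℕ) (hn : 1 ≤ n) (α : ℝ) (hα : α ∈ Set.Ioo (0 : ℝ) 1)
    (c R0 : ℝ) (hc : 0 < c) (hR0 : 0 < R0) :
    (∀ t ∈ Icc t0 ϑ, ∀ w0 : Evec n, ‖w0‖ ≤ R0 →
      IsAdmissible t0 ϑ α c R0 t (fun _ => w0) (fun _ => 0)) ∧
    ∃ R1 M1 H1 : ℝ, 0 < R1 ∧ 0 < M1 ∧ 0 < H1 ∧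
      R1 = (1 + R0) * ML α ((ϑ - t0) ^ α * c) - 1 ∧ M1 = (1 + R1) * c ∧
      ∀ (t : ℝ) (w φ : ℝ → Evec n), IsAdmissible t0 ϑ α c R0 t w φ →
        (∀ τ ∈ Icc t0 t, ‖w τ‖ ≤ R1) ∧
        (∀ᵐ τ ∂(volume.restrict (Icc t0 t)), ‖φ τ‖ ≤ M1) ∧
        (∀ τ ∈ Icc t0 t, ∀ τ' ∈ Icc t0 t, ‖w τ - w τ'‖ ≤ H1 * |τ - τ'| ^ α) := by
  constructor
  · intro t ht w0 hw0
    refine ⟨ht, continuousOn_const, hw0, measurable_const, ⟨0, ?_⟩, ?_, ?_⟩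
    · filter_upwards with τ
      simp
    · intro τ hτ
      simp [RL]
    · filter_upwards with τ
      simp only [norm_zero]
      positivity
  · obtain ⟨hα0, hα1⟩ := hα
    set z : ℝ := (ϑ - t0) ^ α * c with hzdef
    have hzpos : 0 < z := by
      apply mul_pos _ hc
      apply Real.rpow_pos_of_pos
      linarith
    have hsum := ML_summable α hα0 z hzpos.le
    have hML1 : 1 < ML α z := by
      have h2 : (∑ k ∈ Finset.range 2, z ^ k / Real.Gamma (α * k + 1)) ≤ ML α z := by
        apply Summable.sum_le_tsum _ (fun k _ => by positivity) hsum
      have h3 : (∑ k ∈ Finset.range 2, z ^ k / Real.Gamma (α * k + 1))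
          = 1 + z / Real.Gamma (α * 1 + 1) := by
        rw [Finset.sum_range_succ, Finset.sum_range_one]
        norm_num [Real.Gamma_one]
      have h4 : 0 < z / Real.Gamma (α * 1 + 1) := by positivity
      rw [h3] at h2
      linarith
    set R1 : ℝ := (1 + R0) * ML α z - 1 with hR1def
    set M1 : ℝ := (1 + R1) * c with hM1def
    have hR1pos : 0 < R1 := by nlinarith
    have hM1pos : 0 < M1 := by positivity
    have hΓα1 : 0 < Real.Gamma (α + 1) := Real.Gamma_pos_of_pos (by linarith)
    set H1 : ℝ := 2 * M1 / Real.Gamma (α + 1) with hH1def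
    have hH1pos : 0 < H1 := by positivity
    refine ⟨R1, M1, H1, hR1pos, hM1pos, hH1pos, rfl, rfl, ?_⟩
    intro t w φ hadm
    obtain ⟨htI, hw, hw0, hφm, ⟨K, hφK⟩, hRL, hφb⟩ := hadm
    have hwR1 : ∀ τ ∈ Icc t0 t, ‖w τ‖ ≤ R1 := by
      intro τ hτ
      have := gronwall_bound t0 t ϑ α c ⟨hα0, hα1⟩ hc htI.1 htI.2 w φ hw hφm hRL hφb
        (1 + R0) (by linarith) τ hτ
      rw [hR1def]
      linarith
    have hφM1 : ∀ᵐ τ ∂(volume.restrict (Icc t0 t)), ‖φ τ‖ ≤ M1 := by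
      filter_upwards [hφb, ae_restrict_mem measurableSet_Icc] with τ h1 h2
      refine le_trans h1 ?_
      rw [hM1def]
      have := hwR1 τ h2
      nlinarith
    refine ⟨hwR1, hφM1, ?_⟩
    have key : ∀ τ' ∈ Icc t0 t, ∀ τ ∈ Icc t0 t, τ' ≤ τ →
        ‖w τ - w τ'‖ ≤ H1 * (τ - τ') ^ α := by
      intro τ' hτ' τ hτ hle
      have e1 : w τ - w τ' = RL t0 α φ τ - RL t0 α φ τ' := by
        rw [hRL τ hτ, hRL τ' hτ']
        abel
      rw [e1, hH1def]
      rw [mul_comm (2 * M1 / Real.Gamma (α + 1)) ((τ - τ') ^ α)] at *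
      rw [mul_comm]
      exact holder_bound t0 t α hα0 hα1 φ hφm M1 hM1pos.le hφM1 τ' τ hτ'.1 hle hτ.2
    intro τ hτ τ' hτ'
    rcases le_total τ' τ with h | h
    · rw [abs_of_nonneg (by linarith)]
      exact key τ' hτ' τ hτ h
    · rw [abs_of_nonpos (by linarith), norm_sub_rev, neg_sub]
      exact key τ hτ τ' hτ' h


end
end

section
/- Assume (A.1)–(A.3). There exist constants R1 > 0 and H1 > 0, depending only on α, t0, ϑ, R0 and c, such that every motion x generated from any admissible position (t*, w*(·)) by any measurable control realizations u : [t*,ϑ] → U and v : [t*,ϑ] → V satisfies ‖x(t)‖ ≤ R1 and ‖x(t) − x(t′)‖ ≤ H1·|t − t′|^α for all t, t′ ∈ [t0,ϑ]. -/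
open MeasureTheory Set
open scoped RealInnerProductSpace NNReal

noncomputable section

lemma meas_rpow_const {e : ℝ} (he : e ≠ 0) : Measurable fun x : ℝ => x ^ e := by
  have heq : (fun x : ℝ => x ^ e) = fun x =>
      if x = 0 then 0 else if x < 0 then Real.exp (Real.log x * e) * Real.cos (e * Real.pi)
      else Real.exp (Real.log x * e) := by
    funext x
    rcases lt_trichotomy x 0 with h | h | h
    · rw [if_neg h.ne, if_pos h, Real.rpow_def_of_neg h]
    · simp [h, Real.zero_rpow he]
    · rw [if_neg h.ne', if_neg (not_lt.2 h.le), Real.rpow_def_of_pos h]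
  rw [heq]
  refine Measurable.ite (measurableSet_eq) measurable_const ?_
  exact Measurable.ite measurableSet_Iio
    (((Real.measurable_log.mul measurable_const).exp).mul measurable_const)
    ((Real.measurable_log.mul measurable_const).exp)

lemma ker_integrable {α : ℝ} (hα : 0 < α) (t a b : ℝ) :
    IntervalIntegrable (fun τ => (t - τ) ^ (α - 1)) volume a b := by
  have h : IntervalIntegrable (fun x : ℝ => x ^ (α - 1)) volume (t - a) (t - b) :=
    intervalIntegral.intervalIntegrable_rpow' (by linarith)
  simpa using h.comp_sub_left t

lemma ker_integral {α : ℝ} (hα : 0 < α) (t a b : ℝ) :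
    ∫ τ in a..b, (t - τ) ^ (α - 1) = ((t - a) ^ α - (t - b) ^ α) / α := by
  rw [intervalIntegral.integral_comp_sub_left (fun x : ℝ => x ^ (α - 1)) t]
  rw [integral_rpow (Or.inl (by linarith : (-1 : ℝ) < α - 1))]
  have h : α - 1 + 1 = α := by ring
  rw [h]

lemma contOn_comp_aemeasurable {β γ : Type*} [MeasurableSpace β] [TopologicalSpace β]
    [BorelSpace β] [MeasurableSpace γ] [TopologicalSpace γ] [BorelSpace γ]
    {μ : Measure ℝ} {p : ℝ → β} {S : Set β} {F : β → γ}
    (hp : AEMeasurable p μ) (hS : MeasurableSet S) (hF : ContinuousOn F S)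
    (hmem : ∀ᵐ τ ∂μ, p τ ∈ S) : AEMeasurable (fun τ => F (p τ)) μ := by
  have h1 : ∀ᵐ z ∂(μ.map p), z ∈ S := (MeasureTheory.mem_ae_map_iff hp hS).2 hmem
  have h2 : (μ.map p).restrict S = μ.map p := Measure.restrict_eq_self_of_ae_mem h1
  have h3 : AEMeasurable F (μ.map p) := by
    rw [← h2]; exact hF.aemeasurable hS
  exact h3.comp_aemeasurable hp


set_option maxHeartbeats 8000000 in
/-- Corollary 1: under (A.1)–(A.3), there exist constants `R1, H1 > 0`,
depending only on `α, t0, ϑ, R0, c`, such that every motion `x` satisfies `‖x(t)‖ ≤ R1`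
and `‖x(t) - x(t')‖ ≤ H1 |t - t'|^α` for all `t, t' ∈ [t0, ϑ]`. -/
theorem motion_uniform_bounds
    (t0 ϑ : ℝ) (hT : t0 < ϑ) (n : ℕ) (hn : 1 ≤ n) (α : ℝ) (hα : α ∈ Set.Ioo (0 : ℝ) 1)
    (r s : ℕ) (hr : 1 ≤ r) (hs : 1 ≤ s)
    (U : Set (Evec r)) (V : Set (Evec s)) (hUc : IsCompact U) (hUne : U.Nonempty)
    (hVc : IsCompact V) (hVne : V.Nonempty)
    (f : ℝ → Evec n → Evec r → Evec s → Evec n)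
    (hA1 : CondA1 t0 ϑ U V f) (hA2 : CondA2 t0 ϑ U V f)
    (c : ℝ) (hc : 0 < c) (hA3 : CondA3 t0 ϑ U V f c)
    (R0 : ℝ) (hR0 : 0 < R0) :
    ∃ R1 > (0 : ℝ), ∃ H1 > (0 : ℝ),
      ∀ (tstar : ℝ) (wstar φstar : ℝ → Evec n),
        IsAdmissible t0 ϑ α c R0 tstar wstar φstar →
        ∀ (u : ℝ → Evec r) (v : ℝ → Evec s),
          IsControl tstar ϑ U u → IsControl tstar ϑ V v →
          ∀ x, IsMotion t0 ϑ α f tstar wstar φstar u v x →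
            ∀ t ∈ Icc t0 ϑ, ‖x t‖ ≤ R1 ∧
              ∀ t' ∈ Icc t0 ϑ, ‖x t - x t'‖ ≤ H1 * |t - t'| ^ α := by
  obtain ⟨hα0, hα1⟩ := hα
  have hG : 0 < Real.Gamma α := Real.Gamma_pos_of_pos hα0
  set G : ℝ := Real.Gamma α with hGdef
  set D : ℝ := ϑ - t0 with hDdef
  have hD0 : 0 < D := by simp only [hDdef]; linarith
  -- step length for the Grönwall iteration
  have hbase : 0 < α * G / (2 * c) := by positivity
  set δ : ℝ := (α * G / (2 * c)) ^ (α⁻¹) with hδdef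
  have hδ0 : 0 < δ := Real.rpow_pos_of_pos hbase _
  have hδα : δ ^ α = α * G / (2 * c) := Real.rpow_inv_rpow hbase.le hα0.ne'
  have hδcoef : c / G * (δ ^ α / α) = 1 / 2 := by
    rw [hδα]; field_simp
  set CF : ℝ := c / G * (D ^ α / α) with hCFdef
  have hCF0 : 0 ≤ CF := by positivity
  -- the iteration bounds
  set a : ℕ → ℝ := fun k => Nat.rec (motive := fun _ => ℝ) R0
    (fun _ ak => 2 * R0 + 2 * CF * (1 + ak) + 1) k with hadef
  have ha0 : a 0 = R0 := rfl
  have haS : ∀ k, a (k + 1) = 2 * R0 + 2 * CF * (1 + a k) + 1 := fun _ => rfl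
  have hapos : ∀ k, 0 < a k := by
    intro k; induction k with
    | zero => simpa [ha0] using hR0
    | succ k ih =>
      rw [haS]
      have h := mul_nonneg hCF0 (by linarith : (0:ℝ) ≤ 1 + a k)
      linarith
  have hamono : ∀ k, a k ≤ a (k + 1) := by
    intro k; induction k with
    | zero =>
      rw [haS, ha0]
      have h := mul_nonneg hCF0 (by linarith : (0:ℝ) ≤ 1 + R0)
      linarith
    | succ k ih =>
      rw [haS, haS (k + 1)]
      have h := mul_le_mul_of_nonneg_left (by linarith : 1 + a k ≤ 1 + a (k + 1)) hCF0
      linarith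
  set K : ℕ := ⌈D / δ⌉₊ + 1 with hKdef
  have hKδ : ϑ ≤ t0 + (K : ℝ) * δ := by
    have h1 : D / δ ≤ (K : ℝ) := by
      refine le_trans (Nat.le_ceil _) ?_
      exact_mod_cast Nat.le_succ _
    have h2 : D ≤ (K : ℝ) * δ := by
      rw [div_le_iff₀ hδ0] at h1; exact h1
    simp only [hDdef] at h2; linarith
  set R1 : ℝ := a K with hR1def
  have hR1 : 0 < R1 := hapos K
  set H1 : ℝ := 2 * (1 + R1) * c / (G * α) with hH1def
  have hH1 : 0 < H1 := by positivity
  refine ⟨R1, hR1, H1, hH1, ?_⟩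
  rintro tstar wstar φstar hadm u v hu hv x hmot
  obtain ⟨htsmem, hwcont, hw0, hφmeas, ⟨Kb, hφbdd⟩, hwrep, hφbound⟩ := hadm
  obtain ⟨hxcont, hxlow, hxhigh⟩ := hmot
  have ht0s : t0 ≤ tstar := htsmem.1
  have htsϑ : tstar ≤ ϑ := htsmem.2
  have hx0 : x t0 = wstar t0 := hxlow t0 ⟨le_refl _, ht0s⟩
  -- the combined right-hand side
  set g : ℝ → Evec n := fun τ => if τ < tstar then φstar τ else f τ (x τ) (u τ) (v τ)
    with hgdef
  -- measurability of g
  have hxaem : AEMeasurable x (volume.restrict (Icc t0 ϑ)) :=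
    hxcont.aemeasurable measurableSet_Icc
  haveI : BorelSpace (ℝ × Evec n × Evec r × Evec s) := Prod.borelSpace
  have hfae : AEMeasurable (fun τ => f τ (x τ) (u τ) (v τ))
      (volume.restrict (Icc tstar ϑ)) := by
    have hpaem : AEMeasurable (fun τ => (τ, x τ, u τ, v τ))
        (volume.restrict (Icc tstar ϑ)) := by
      refine AEMeasurable.prodMk aemeasurable_id ?_
      refine AEMeasurable.prodMk ?_ ?_
      · exact hxaem.mono_measure (Measure.restrict_mono (Icc_subset_Icc ht0s le_rfl) le_rfl)
      · exact AEMeasurable.prodMk hu.1.aemeasurable hv.1.aemeasurable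
    have hSmeas : MeasurableSet ((Icc t0 ϑ) ×ˢ (univ : Set (Evec n)) ×ˢ U ×ˢ V) :=
      measurableSet_Icc.prod (MeasurableSet.univ.prod
        ((hUc.isClosed.measurableSet).prod (hVc.isClosed.measurableSet)))
    have hmemS : ∀ᵐ τ ∂(volume.restrict (Icc tstar ϑ)),
        (τ, x τ, u τ, v τ) ∈ (Icc t0 ϑ) ×ˢ (univ : Set (Evec n)) ×ˢ U ×ˢ V := by
      filter_upwards [self_mem_ae_restrict measurableSet_Icc] with τ hτ
      exact ⟨⟨ht0s.trans hτ.1, hτ.2⟩, mem_univ _, hu.2 τ hτ, hv.2 τ hτ⟩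
    exact contOn_comp_aemeasurable hpaem hSmeas hA1 hmemS
  have hgaem : AEMeasurable g (volume.restrict (Icc t0 ϑ)) := by
    have hsplit : Icc t0 ϑ = (Icc t0 ϑ ∩ Iio tstar) ∪ (Icc t0 ϑ ∩ Ici tstar) := by
      rw [← inter_union_distrib_left, Iio_union_Ici, inter_univ]
    rw [hsplit, aemeasurable_union_iff]
    constructor
    · refine AEMeasurable.congr (hφmeas.aemeasurable) ?_
      filter_upwards [self_mem_ae_restrict (measurableSet_Icc.inter measurableSet_Iio)]
        with τ hτ
      show φstar τ = if τ < tstar then φstar τ else f τ (x τ) (u τ) (v τ)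
      rw [if_pos (mem_Iio.1 hτ.2)]
    · refine AEMeasurable.congr
        (hfae.mono_measure (Measure.restrict_mono
          (fun τ hτ => Set.mem_Icc.2 ⟨hτ.2, hτ.1.2⟩) le_rfl)) ?_
      filter_upwards [self_mem_ae_restrict (measurableSet_Icc.inter measurableSet_Ici)]
        with τ hτ
      show f τ (x τ) (u τ) (v τ) = if τ < tstar then φstar τ else f τ (x τ) (u τ) (v τ)
      rw [if_neg (not_lt.2 (mem_Ici.1 hτ.2))]
  have hgsm : AEStronglyMeasurable g (volume.restrict (Icc t0 ϑ)) :=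
    hgaem.aestronglyMeasurable
  -- a.e. bound on g
  have hgb : ∀ᵐ τ ∂(volume.restrict (Icc t0 ϑ)), ‖g τ‖ ≤ (1 + ‖x τ‖) * c := by
    have h1 : ∀ᵐ τ ∂(volume : Measure ℝ), τ ∈ Icc t0 tstar →
        ‖φstar τ‖ ≤ (1 + ‖wstar τ‖) * c := (ae_restrict_iff' measurableSet_Icc).1 hφbound
    rw [ae_restrict_iff' measurableSet_Icc]
    filter_upwards [h1] with τ hτ1 hτ
    by_cases hlt : τ < tstar
    · have hmem : τ ∈ Icc t0 tstar := ⟨hτ.1, hlt.le⟩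
      have h2 := hτ1 hmem
      have h3 : g τ = φstar τ := by simp only [hgdef, if_pos hlt]
      rw [h3, hxlow τ hmem]
      exact h2
    · have h3 : g τ = f τ (x τ) (u τ) (v τ) := by simp only [hgdef, if_neg hlt]
      rw [h3]
      exact hA3 τ hτ (x τ) (u τ) (hu.2 τ ⟨not_lt.1 hlt, hτ.2⟩) (v τ)
        (hv.2 τ ⟨not_lt.1 hlt, hτ.2⟩)
  -- global sup of ‖x‖
  obtain ⟨tM, htM, hMmax⟩ := (isCompact_Icc : IsCompact (Icc t0 ϑ)).exists_isMaxOn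
    (nonempty_Icc.2 hT.le) (continuous_norm.comp_continuousOn hxcont)
  set M : ℝ := ‖x tM‖ with hMdef
  have hMb : ∀ τ ∈ Icc t0 ϑ, ‖x τ‖ ≤ M := fun τ hτ => hMmax hτ
  have hgbM : ∀ᵐ τ ∂(volume.restrict (Icc t0 ϑ)), ‖g τ‖ ≤ (1 + M) * c := by
    filter_upwards [hgb, self_mem_ae_restrict measurableSet_Icc] with τ h1 h2
    exact h1.trans (mul_le_mul_of_nonneg_right (by linarith [hMb τ h2]) hc.le)
  -- integrability of the kernel against g
  have hInt : ∀ t ∈ Icc t0 ϑ, ∀ p q : ℝ, t0 ≤ p → p ≤ q → q ≤ t →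
      IntervalIntegrable (fun τ => (t - τ) ^ (α - 1) • g τ) volume p q := by
    intro t ht p q htp hpq hqt
    have hsub : Ioc p q ⊆ Icc t0 ϑ :=
      fun τ hτ => ⟨htp.trans hτ.1.le, hτ.2.trans (hqt.trans ht.2)⟩
    rw [intervalIntegrable_iff_integrableOn_Ioc_of_le hpq]
    have hker : IntegrableOn (fun τ => (t - τ) ^ (α - 1) * ((1 + M) * c)) (Ioc p q) := by
      have h := ker_integrable hα0 t p q
      rw [intervalIntegrable_iff_integrableOn_Ioc_of_le hpq] at h
      exact h.mul_const _
    refine Integrable.mono' hker ?_ ?_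
    · refine AEStronglyMeasurable.fun_smul ?_ ?_
      · exact (((meas_rpow_const (by linarith : α - 1 ≠ 0)).comp
          (measurable_const.sub measurable_id))).aestronglyMeasurable
      · exact hgsm.mono_measure (Measure.restrict_mono hsub le_rfl)
    · filter_upwards [hgbM.filter_mono (ae_mono (Measure.restrict_mono hsub le_rfl)),
        self_mem_ae_restrict measurableSet_Ioc] with τ hb hmem
      rw [norm_smul]
      have h1 : 0 ≤ t - τ := by linarith [hmem.2]
      have h2 : ‖(t - τ) ^ (α - 1)‖ = (t - τ) ^ (α - 1) := by
        rw [Real.norm_eq_abs, abs_of_nonneg (Real.rpow_nonneg h1 _)]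
      rw [h2]
      exact mul_le_mul_of_nonneg_left hb (Real.rpow_nonneg h1 _)
  -- core estimate
  have hne : ∀ z : ℝ, ∀ᵐ τ : ℝ ∂volume, τ ≠ z := by
    intro z
    rw [ae_iff]
    simp only [ne_eq, not_not, Set.setOf_eq_eq_singleton]
    exact measure_singleton z
  have hEst : ∀ t ∈ Icc t0 ϑ, ∀ p q : ℝ, t0 ≤ p → p ≤ q → q ≤ t → ∀ B : ℝ,
      (∀ τ ∈ Ioc p q, ‖x τ‖ ≤ B) →
      ‖∫ τ in p..q, (t - τ) ^ (α - 1) • g τ‖ ≤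
        (1 + B) * c * (((t - p) ^ α - (t - q) ^ α) / α) := by
    intro t ht p q htp hpq hqt B hxB
    have hsub : Icc p q ⊆ Icc t0 ϑ :=
      fun τ hτ => ⟨htp.trans hτ.1, hτ.2.trans (hqt.trans ht.2)⟩
    calc ‖∫ τ in p..q, (t - τ) ^ (α - 1) • g τ‖
        ≤ ∫ τ in p..q, ‖(t - τ) ^ (α - 1) • g τ‖ :=
          intervalIntegral.norm_integral_le_integral_norm hpq
      _ ≤ ∫ τ in p..q, (t - τ) ^ (α - 1) * ((1 + B) * c) := by
          refine intervalIntegral.integral_mono_ae_restrict hpq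
            ((hInt t ht p q htp hpq hqt).norm) ((ker_integrable hα0 t p q).mul_const _) ?_
          filter_upwards [hgb.filter_mono (ae_mono (Measure.restrict_mono hsub le_rfl)),
            self_mem_ae_restrict measurableSet_Icc,
            (hne p).filter_mono (ae_mono Measure.restrict_le_self)] with τ h1 h2 h3
          have hmem : τ ∈ Ioc p q := ⟨lt_of_le_of_ne h2.1 (Ne.symm h3), h2.2⟩
          have h4 : 0 ≤ t - τ := by linarith [hmem.2]
          rw [norm_smul, Real.norm_eq_abs, abs_of_nonneg (Real.rpow_nonneg h4 _)]
          refine mul_le_mul_of_nonneg_left ?_ (Real.rpow_nonneg h4 _)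
          exact h1.trans (mul_le_mul_of_nonneg_right (by linarith [hxB τ hmem]) hc.le)
      _ = (1 + B) * c * (((t - p) ^ α - (t - q) ^ α) / α) := by
          rw [intervalIntegral.integral_mul_const, ker_integral hα0]; ring
  -- representation of x via g
  have hRep : ∀ t ∈ Icc t0 ϑ, x t = wstar t0
      + (1 / G) • ∫ τ in t0..t, (t - τ) ^ (α - 1) • g τ := by
    intro t ht
    rcases le_or_gt t tstar with hts | hts
    · have h1 := hxlow t ⟨ht.1, hts⟩
      have h2 := hwrep t ⟨ht.1, hts⟩
      rw [h1, h2]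
      simp only [RL, ← hGdef]
      congr 2
      refine intervalIntegral.integral_congr_ae ?_
      filter_upwards [hne tstar] with τ hτ1 hτ2
      rw [uIoc_of_le ht.1] at hτ2
      have hlt : τ < tstar := lt_of_le_of_ne (hτ2.2.trans hts) hτ1
      simp only [hgdef, if_pos hlt]
    · have h3 := hxhigh t ⟨hts.le, ht.2⟩
      rw [h3]
      have e1 : ∫ τ in t0..tstar, (t - τ) ^ (α - 1) • φstar τ
          = ∫ τ in t0..tstar, (t - τ) ^ (α - 1) • g τ := by
        refine intervalIntegral.integral_congr_ae ?_
        filter_upwards [hne tstar] with τ hτ1 hτ2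
        rw [uIoc_of_le ht0s] at hτ2
        have hlt : τ < tstar := lt_of_le_of_ne hτ2.2 hτ1
        simp only [hgdef, if_pos hlt]
      have e2 : ∫ τ in tstar..t, (t - τ) ^ (α - 1) • f τ (x τ) (u τ) (v τ)
          = ∫ τ in tstar..t, (t - τ) ^ (α - 1) • g τ := by
        refine intervalIntegral.integral_congr ?_
        intro τ hτ
        rw [uIcc_of_le hts.le] at hτ
        simp only [hgdef, if_neg (not_lt.2 hτ.1)]
      rw [e1, e2, add_assoc, ← smul_add,
        intervalIntegral.integral_add_adjacent_intervals
          (hInt t ht t0 tstar le_rfl ht0s hts.le)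
          (hInt t ht tstar t ht0s hts.le le_rfl)]
  -- Grönwall iteration
  have key : ∀ k : ℕ, ∀ t ∈ Icc t0 ϑ, t ≤ t0 + (k : ℝ) * δ → ‖x t‖ ≤ a k := by
    intro k
    induction k with
    | zero =>
      intro t ht hle
      simp only [Nat.cast_zero, zero_mul, add_zero] at hle
      have ht0 : t = t0 := le_antisymm hle ht.1
      rw [ht0, hx0, ha0]
      exact hw0
    | succ k ih =>
      intro t ht hle
      set b : ℝ := min (t0 + ((k : ℝ) + 1) * δ) ϑ with hbdef
      have hbϑ : b ≤ ϑ := min_le_right _ _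
      have ht0b : t0 ≤ b := by
        refine le_min ?_ hT.le
        have h := mul_nonneg (by positivity : (0:ℝ) ≤ (k : ℝ) + 1) hδ0.le
        linarith
      obtain ⟨th, hth, hthmax⟩ := (isCompact_Icc : IsCompact (Icc t0 b)).exists_isMaxOn
        (nonempty_Icc.2 ht0b) (continuous_norm.comp_continuousOn
          (hxcont.mono (Icc_subset_Icc le_rfl hbϑ)))
      have hthb : ∀ τ ∈ Icc t0 b, ‖x τ‖ ≤ ‖x th‖ := fun τ hτ => hthmax hτ
      have hxt_le : ‖x t‖ ≤ ‖x th‖ := by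
        refine hthb t ⟨ht.1, le_min ?_ ht.2⟩
        push_cast at hle ⊢; linarith
      refine hxt_le.trans ?_
      set tk : ℝ := t0 + (k : ℝ) * δ with htkdef
      have hthIcc : th ∈ Icc t0 ϑ := Set.mem_Icc.2 ⟨(mem_Icc.1 hth).1, (mem_Icc.1 hth).2.trans hbϑ⟩
      rcases le_or_gt th tk with hcase | hcase
      · exact (ih th hthIcc hcase).trans (hamono k)
      · have htk0 : t0 ≤ tk := by
          have h := mul_nonneg (Nat.cast_nonneg k : (0:ℝ) ≤ (k:ℝ)) hδ0.le
          simp only [htkdef]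
          linarith
        have htkth : tk ≤ th := hcase.le
        have hrep := hRep th hthIcc
        have hsplit : ∫ τ in t0..th, (th - τ) ^ (α - 1) • g τ
            = (∫ τ in t0..tk, (th - τ) ^ (α - 1) • g τ)
              + ∫ τ in tk..th, (th - τ) ^ (α - 1) • g τ :=
          (intervalIntegral.integral_add_adjacent_intervals
            (hInt th hthIcc t0 tk le_rfl htk0 htkth)
            (hInt th hthIcc tk th htk0 htkth le_rfl)).symm
        have hE1 := hEst th hthIcc t0 tk le_rfl htk0 htkth (a k)
          (fun τ hτ => ih τ (Set.mem_Icc.2 ⟨le_of_lt (mem_Ioc.1 hτ).1,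
            (mem_Ioc.1 hτ).2.trans (htkth.trans (mem_Icc.1 hthIcc).2)⟩) (mem_Ioc.1 hτ).2)
        have hE2 := hEst th hthIcc tk th htk0 htkth le_rfl (‖x th‖)
          (fun τ hτ => hthb τ (Set.mem_Icc.2 ⟨htk0.trans (mem_Ioc.1 hτ).1.le,
            (mem_Ioc.1 hτ).2.trans (mem_Icc.1 hth).2⟩))
        -- numeric bounds on the kernel integrals
        have hq1 : ((th - t0) ^ α - (th - tk) ^ α) / α ≤ D ^ α / α := by
          have h1 : (th - t0) ^ α ≤ D ^ α :=
            Real.rpow_le_rpow (by linarith [hthIcc.1]) (by simp only [hDdef]; linarith [hthIcc.2]) hα0.le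
          have h2 : 0 ≤ (th - tk) ^ α := Real.rpow_nonneg (by linarith) _
          have h3 : (th - t0) ^ α - (th - tk) ^ α ≤ D ^ α := by linarith
          gcongr
        have hthb' : th ≤ t0 + ((k : ℝ) + 1) * δ := le_trans hth.2 (min_le_left _ _)
        have hq2 : ((th - tk) ^ α - (th - th) ^ α) / α ≤ δ ^ α / α := by
          have h0 : th - th = 0 := sub_self th
          have h1 : (th - tk) ^ α ≤ δ ^ α := by
            refine Real.rpow_le_rpow (by linarith) ?_ hα0.le
            simp only [htkdef] at hthb' ⊢
            linarith
          rw [h0, Real.zero_rpow hα0.ne', sub_zero]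
          gcongr
        have heq : x th = wstar t0 + (1 / G) • ((∫ τ in t0..tk, (th - τ) ^ (α - 1) • g τ)
            + ∫ τ in tk..th, (th - τ) ^ (α - 1) • g τ) := by
          rw [hrep, hsplit]
        have hnorm : ‖x th‖ ≤ R0
            + (1 / G) * ((1 + a k) * c * (((th - t0) ^ α - (th - tk) ^ α) / α))
            + (1 / G) * ((1 + ‖x th‖) * c * (((th - tk) ^ α - (th - th) ^ α) / α)) := by
          have hGn : ‖(1 / G : ℝ)‖ = 1 / G := by
            rw [Real.norm_eq_abs, abs_of_pos (by positivity)]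
          calc ‖x th‖
              = ‖wstar t0 + (1 / G) • ((∫ τ in t0..tk, (th - τ) ^ (α - 1) • g τ)
                + ∫ τ in tk..th, (th - τ) ^ (α - 1) • g τ)‖ := by rw [heq]
            _ ≤ ‖wstar t0‖ + ((1 / G) * ‖∫ τ in t0..tk, (th - τ) ^ (α - 1) • g τ‖
                + (1 / G) * ‖∫ τ in tk..th, (th - τ) ^ (α - 1) • g τ‖) := by
                refine (norm_add_le _ _).trans ?_
                rw [smul_add]
                refine add_le_add le_rfl ?_
                refine (norm_add_le _ _).trans ?_
                rw [norm_smul, norm_smul, hGn]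
            _ ≤ R0 + ((1 / G) * ((1 + a k) * c * (((th - t0) ^ α - (th - tk) ^ α) / α))
                + (1 / G) * ((1 + ‖x th‖) * c * (((th - tk) ^ α - (th - th) ^ α) / α))) := by
                refine add_le_add hw0 (add_le_add ?_ ?_)
                · exact mul_le_mul_of_nonneg_left hE1 (by positivity)
                · exact mul_le_mul_of_nonneg_left hE2 (by positivity)
            _ = _ := by ring
        have hA' : (1 / G) * ((1 + a k) * c * (((th - t0) ^ α - (th - tk) ^ α) / α))
            ≤ (1 + a k) * CF := by
          have h1ak : (0:ℝ) ≤ (1 + a k) * c := mul_nonneg (by linarith [hapos k]) hc.le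
          calc (1 / G) * ((1 + a k) * c * (((th - t0) ^ α - (th - tk) ^ α) / α))
              ≤ (1 / G) * ((1 + a k) * c * (D ^ α / α)) := by
                exact mul_le_mul_of_nonneg_left
                  (mul_le_mul_of_nonneg_left hq1 h1ak) (by positivity)
            _ = (1 + a k) * (c / G * (D ^ α / α)) := by ring
            _ = (1 + a k) * CF := by rw [hCFdef]
        have hB' : (1 / G) * ((1 + ‖x th‖) * c * (((th - tk) ^ α - (th - th) ^ α) / α))
            ≤ (1 + ‖x th‖) / 2 := by
          calc (1 / G) * ((1 + ‖x th‖) * c * (((th - tk) ^ α - (th - th) ^ α) / α))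
              ≤ (1 / G) * ((1 + ‖x th‖) * c * (δ ^ α / α)) := by
                exact mul_le_mul_of_nonneg_left
                  (mul_le_mul_of_nonneg_left hq2 (by positivity)) (by positivity)
            _ = (1 + ‖x th‖) * (c / G * (δ ^ α / α)) := by ring
            _ = (1 + ‖x th‖) * (1 / 2) := by rw [hδcoef]
            _ = (1 + ‖x th‖) / 2 := by ring
        rw [haS]
        linarith
  -- uniform bound
  have hbound : ∀ t ∈ Icc t0 ϑ, ‖x t‖ ≤ R1 := by
    intro t ht
    exact key K t ht (le_trans ht.2 hKδ)
  -- Hölder estimate (one-sided)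
  have hhold : ∀ t' t : ℝ, t' ∈ Icc t0 ϑ → t ∈ Icc t0 ϑ → t' ≤ t →
      ‖x t - x t'‖ ≤ H1 * (t - t') ^ α := by
    intro t' t ht' ht htt
    have h1 := hRep t ht
    have h2 := hRep t' ht'
    have hi1 := hInt t ht t0 t' le_rfl ht'.1 htt
    have hi2 := hInt t ht t' t ht'.1 htt le_rfl
    have hi3 := hInt t' ht' t0 t' le_rfl ht'.1 le_rfl
    have hsplit : ∫ τ in t0..t, (t - τ) ^ (α - 1) • g τ
        = (∫ τ in t0..t', (t - τ) ^ (α - 1) • g τ)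
          + ∫ τ in t'..t, (t - τ) ^ (α - 1) • g τ :=
      (intervalIntegral.integral_add_adjacent_intervals hi1 hi2).symm
    have hdiff : x t - x t' = (1 / G) •
        (((∫ τ in t0..t', (t - τ) ^ (α - 1) • g τ)
          - ∫ τ in t0..t', (t' - τ) ^ (α - 1) • g τ)
          + ∫ τ in t'..t, (t - τ) ^ (α - 1) • g τ) := by
      rw [h1, h2, hsplit]
      module
    -- bound the middle difference
    have hI1 : ‖(∫ τ in t0..t', (t - τ) ^ (α - 1) • g τ)
          - ∫ τ in t0..t', (t' - τ) ^ (α - 1) • g τ‖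
        ≤ (1 + R1) * c * (((t' - t0) ^ α - (t - t0) ^ α + (t - t') ^ α) / α) := by
      have hFeq : (fun τ => (t - τ) ^ (α - 1) • g τ - (t' - τ) ^ (α - 1) • g τ)
          = fun τ => ((t - τ) ^ (α - 1) - (t' - τ) ^ (α - 1)) • g τ := by
        funext τ; rw [sub_smul]
      calc ‖(∫ τ in t0..t', (t - τ) ^ (α - 1) • g τ)
            - ∫ τ in t0..t', (t' - τ) ^ (α - 1) • g τ‖
          = ‖∫ τ in t0..t', ((t - τ) ^ (α - 1) • g τ - (t' - τ) ^ (α - 1) • g τ)‖ := by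
            rw [intervalIntegral.integral_sub hi1 hi3]
        _ ≤ ∫ τ in t0..t', ‖(t - τ) ^ (α - 1) • g τ - (t' - τ) ^ (α - 1) • g τ‖ :=
            intervalIntegral.norm_integral_le_integral_norm ht'.1
        _ ≤ ∫ τ in t0..t', ((t' - τ) ^ (α - 1) - (t - τ) ^ (α - 1)) * ((1 + R1) * c) := by
            refine intervalIntegral.integral_mono_ae_restrict ht'.1
              ((hi1.sub hi3).norm)
              (((ker_integrable hα0 t' t0 t').sub (ker_integrable hα0 t t0 t')).mul_const _) ?_
            filter_upwards [hgb.filter_mono (ae_mono (Measure.restrict_mono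
                (Icc_subset_Icc le_rfl (htt.trans ht.2)) le_rfl)),
              self_mem_ae_restrict measurableSet_Icc,
              (hne t').filter_mono (ae_mono Measure.restrict_le_self)] with τ hb hmem hτne
            have hτt' : τ < t' := lt_of_le_of_ne hmem.2 hτne
            have hk1 : (0:ℝ) < t' - τ := by linarith
            have hk2 : (t - τ) ^ (α - 1) ≤ (t' - τ) ^ (α - 1) :=
              Real.rpow_le_rpow_of_nonpos hk1 (by linarith) (by linarith)
            have hk3 : (0:ℝ) ≤ (t - τ) ^ (α - 1) := Real.rpow_nonneg (by linarith) _
            have hgτ : ‖g τ‖ ≤ (1 + R1) * c :=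
              hb.trans (mul_le_mul_of_nonneg_right
                (by linarith [hbound τ (Set.mem_Icc.2 ⟨(mem_Icc.1 hmem).1, hτt'.le.trans (htt.trans ht.2)⟩)]) hc.le)
            calc ‖(t - τ) ^ (α - 1) • g τ - (t' - τ) ^ (α - 1) • g τ‖
                = ‖((t - τ) ^ (α - 1) - (t' - τ) ^ (α - 1)) • g τ‖ := by rw [sub_smul]
              _ = |(t - τ) ^ (α - 1) - (t' - τ) ^ (α - 1)| * ‖g τ‖ := by
                  rw [norm_smul, Real.norm_eq_abs]
              _ = ((t' - τ) ^ (α - 1) - (t - τ) ^ (α - 1)) * ‖g τ‖ := by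
                  rw [abs_of_nonpos (by linarith), neg_sub]
              _ ≤ ((t' - τ) ^ (α - 1) - (t - τ) ^ (α - 1)) * ((1 + R1) * c) :=
                  mul_le_mul_of_nonneg_left hgτ (by linarith)
        _ = (((t' - t0) ^ α - (t' - t') ^ α) / α - ((t - t0) ^ α - (t - t') ^ α) / α)
              * ((1 + R1) * c) := by
            rw [intervalIntegral.integral_mul_const,
              intervalIntegral.integral_sub (ker_integrable hα0 t' t0 t')
                (ker_integrable hα0 t t0 t'),
              ker_integral hα0, ker_integral hα0]
        _ = (1 + R1) * c * (((t' - t0) ^ α - (t - t0) ^ α + (t - t') ^ α) / α) := by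
            rw [sub_self, Real.zero_rpow hα0.ne']
            ring
    have hI2 : ‖∫ τ in t'..t, (t - τ) ^ (α - 1) • g τ‖
        ≤ (1 + R1) * c * ((t - t') ^ α / α) := by
      have h := hEst t ht t' t ht'.1 htt le_rfl R1
        (fun τ hτ => hbound τ (Set.mem_Icc.2 ⟨ht'.1.trans (mem_Ioc.1 hτ).1.le, (mem_Ioc.1 hτ).2.trans ht.2⟩))
      rw [sub_self, Real.zero_rpow hα0.ne', sub_zero] at h
      exact h
    have hmono : (t' - t0) ^ α ≤ (t - t0) ^ α :=
      Real.rpow_le_rpow (by linarith [ht'.1]) (by linarith) hα0.le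
    have hGn : ‖(1 / G : ℝ)‖ = 1 / G := by
      rw [Real.norm_eq_abs, abs_of_pos (by positivity)]
    calc ‖x t - x t'‖
        ≤ (1 / G) * (‖(∫ τ in t0..t', (t - τ) ^ (α - 1) • g τ)
            - ∫ τ in t0..t', (t' - τ) ^ (α - 1) • g τ‖
          + ‖∫ τ in t'..t, (t - τ) ^ (α - 1) • g τ‖) := by
          rw [hdiff, norm_smul, hGn]
          exact mul_le_mul_of_nonneg_left (norm_add_le _ _) (by positivity)
      _ ≤ (1 / G) * ((1 + R1) * c * (((t' - t0) ^ α - (t - t0) ^ α + (t - t') ^ α) / α)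
          + (1 + R1) * c * ((t - t') ^ α / α)) := by
          exact mul_le_mul_of_nonneg_left (add_le_add hI1 hI2) (by positivity)
      _ ≤ (1 / G) * ((1 + R1) * c * ((t - t') ^ α / α)
          + (1 + R1) * c * ((t - t') ^ α / α)) := by
          refine mul_le_mul_of_nonneg_left (add_le_add ?_ le_rfl) (by positivity)
          refine mul_le_mul_of_nonneg_left ?_ (by positivity)
          gcongr
          linarith
      _ = H1 * (t - t') ^ α := by
          rw [hH1def]; ring
  -- final assembly
  intro t ht
  refine ⟨hbound t ht, ?_⟩
  intro t' ht'
  rcases le_total t' t with h | h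
  · have := hhold t' t ht' ht h
    rwa [← abs_of_nonneg (by linarith : (0:ℝ) ≤ t - t')] at this
  · have := hhold t t' ht ht' h
    rw [norm_sub_rev, ← abs_of_nonneg (by linarith : (0:ℝ) ≤ t' - t), abs_sub_comm] at this
    exact this

end
end

section
/- Assume (A.1)–(A.3). Let (t*, w*(·)) be an admissible position, let t* ≤ t^ ≤ ϑ, let u, v be measurable control realizations on [t*,ϑ], and let x be the motion generated from (t*, w*(·)) by (u, v). Let u^, v^ be measurable control realizations on [t^,ϑ] and let x^ be the motion generated from the admissible position (t^, x|_{[t0,t^]}) by (u^, v^). Then x^ coincides with the motion generated from (t*, w*(·)) by the concatenated control realizations equal to (u, v) on [t*, t^) and to (u^, v^) on [t^, ϑ]. -/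
open MeasureTheory Set
open scoped RealInnerProductSpace NNReal

noncomputable section

section MCHelpers
set_option linter.unusedSectionVars false
variable {E : Type*} [NormedAddCommGroup E] [NormedSpace ℝ E] [CompleteSpace E]
  [MeasurableSpace E] [BorelSpace E] [SecondCountableTopology E]

lemma kernel_integrableOn (β a c c' : ℝ) (hβ : -1 < β) (hcc' : c ≤ c')
    (g : ℝ → E) (hg : AEStronglyMeasurable g (volume.restrict (Ioc a c)))
    (K : ℝ) (hK : ∀ᵐ τ ∂(volume.restrict (Ioc a c)), ‖g τ‖ ≤ K) :
    IntegrableOn (fun τ => ((c' - τ) ^ β) • g τ) (Ioc a c) := by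
  rcases le_or_gt c a with h | h
  · rw [Set.Ioc_eq_empty (not_lt.2 h)]; exact integrableOn_empty
  have hker : IntegrableOn (fun τ => (c' - τ) ^ β) (Ioc a c) := by
    have h0 : IntervalIntegrable (fun x : ℝ => x ^ β) volume (c' - a) (c' - c) :=
      intervalIntegral.intervalIntegrable_rpow' hβ
    have h1 := h0.comp_sub_left c'
    simp only [sub_sub_cancel] at h1
    exact (intervalIntegrable_iff_integrableOn_Ioc_of_le h.le).1 h1
  refine (hker.mul_const K).mono'
    (((measurable_const.sub measurable_id).pow measurable_const).aestronglyMeasurable.smul hg) ?_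
  filter_upwards [hK, ae_restrict_mem measurableSet_Ioc] with τ hτK hτ
  have hb : (0:ℝ) ≤ c' - τ := by linarith [hτ.2]
  calc ‖((c' - τ) ^ β) • g τ‖ = (c' - τ) ^ β * ‖g τ‖ := by
        rw [norm_smul, Real.norm_eq_abs, abs_of_nonneg (Real.rpow_nonneg hb β)]
    _ ≤ (c' - τ) ^ β * K := mul_le_mul_of_nonneg_left hτK (Real.rpow_nonneg hb β)

lemma kernel_intervalIntegrable (β a c c' : ℝ) (hβ : -1 < β) (hac : a ≤ c) (hcc' : c ≤ c')
    (g : ℝ → E) (hg : AEStronglyMeasurable g (volume.restrict (Ioc a c)))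
    (K : ℝ) (hK : ∀ᵐ τ ∂(volume.restrict (Ioc a c)), ‖g τ‖ ≤ K) :
    IntervalIntegrable (fun τ => ((c' - τ) ^ β) • g τ) volume a c :=
  (intervalIntegrable_iff_integrableOn_Ioc_of_le hac).2
    (kernel_integrableOn β a c c' hβ hcc' g hg K hK)

lemma setInt_if_le (a c σ : ℝ) (hσ : σ ≤ c) (h : ℝ → E) :
    ∫ τ in Ioc a c, (if τ ≤ σ then h τ else 0) = ∫ τ in Ioc a σ, h τ := by
  have he : (fun τ => if τ ≤ σ then h τ else 0) = (Iic σ).indicator h := by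
    funext τ; simp [Set.indicator_apply, Set.mem_Iic]
  rw [he, setIntegral_indicator measurableSet_Iic, Set.Ioc_inter_Iic, min_eq_right hσ]

lemma setInt_if_ge (a c τ : ℝ) (hτ : a < τ) (h : ℝ → E) :
    ∫ σ in Ioc a c, (if τ ≤ σ then h σ else 0) = ∫ σ in Icc τ c, h σ := by
  have he : (fun σ => if τ ≤ σ then h σ else 0) = (Ici τ).indicator h := by
    funext σ; simp [Set.indicator_apply, Set.mem_Ici]
  have hset : Ioc a c ∩ Ici τ = Icc τ c := by
    ext σ
    constructor
    · rintro ⟨⟨_, h2⟩, h3⟩; exact ⟨h3, h2⟩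
    · rintro ⟨h3, h2⟩; exact ⟨⟨hτ.trans_le h3, h2⟩, h3⟩
  rw [he, setIntegral_indicator measurableSet_Ici, hset]

lemma if_kernel_integrable (β a c σ : ℝ) (hβ : -1 < β) (hσc : σ ≤ c)
    (g : ℝ → E) (hg : AEStronglyMeasurable g (volume.restrict (Ioc a c)))
    (K : ℝ) (hK : ∀ᵐ τ ∂(volume.restrict (Ioc a c)), ‖g τ‖ ≤ K) :
    Integrable (fun τ => if τ ≤ σ then ((σ - τ) ^ β) • g τ else 0)
      (volume.restrict (Ioc a c)) := by
  have hsub : Ioc a σ ⊆ Ioc a c := Set.Ioc_subset_Ioc_right hσc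
  have h1 : IntegrableOn (fun τ => ((σ - τ) ^ β) • g τ) (Ioc a σ) :=
    kernel_integrableOn β a σ σ hβ le_rfl g
      (hg.mono_measure (Measure.restrict_mono hsub le_rfl))
      K (ae_restrict_of_ae_restrict_of_subset hsub hK)
  have he : (fun τ => if τ ≤ σ then ((σ - τ) ^ β) • g τ else 0)
      = (Iic σ).indicator (fun τ => ((σ - τ) ^ β) • g τ) := by
    funext τ; simp [Set.indicator_apply, Set.mem_Iic]
  rw [he]
  refine IntegrableOn.integrable_indicator ?_ measurableSet_Iic
  rw [IntegrableOn, Measure.restrict_restrict measurableSet_Iic, Set.inter_comm,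
    Set.Ioc_inter_Iic, min_eq_right hσc]
  exact h1


lemma rpow_sub_integral (β a σ : ℝ) (hβ : -1 < β) (haσ : a ≤ σ) :
    ∫ τ in a..σ, (σ - τ) ^ β = (σ - a) ^ (β + 1) / (β + 1) := by
  rw [intervalIntegral.integral_comp_sub_left (fun x => x ^ β) σ, sub_self,
    integral_rpow (Or.inl hβ), Real.zero_rpow (by linarith : β + 1 ≠ 0), sub_zero]

lemma betaInt_intervalIntegrable (α : ℝ) (hα0 : 0 < α) (hα1 : α < 1) :
    IntervalIntegrable (fun x : ℝ => (1 - x) ^ (-α) * x ^ (α - 1)) volume 0 1 := by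
  have h1 : IntervalIntegrable (fun x : ℝ => (1 - x) ^ (-α) * x ^ (α - 1)) volume 0 (1/2) := by
    have hr : IntervalIntegrable (fun x : ℝ => x ^ (α - 1)) volume 0 (1/2) :=
      intervalIntegral.intervalIntegrable_rpow' (by linarith)
    have hc : ContinuousOn (fun x : ℝ => (1 - x) ^ (-α)) (Set.uIcc 0 (1/2)) := by
      apply ContinuousOn.rpow_const (by fun_prop)
      intro x hx
      rw [Set.uIcc_of_le (by norm_num : (0:ℝ) ≤ 1/2)] at hx
      left; intro h0; have := hx.2; rw [sub_eq_zero] at h0; linarith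
    have := hr.mul_continuousOn hc
    simpa [mul_comm] using this
  have h2 : IntervalIntegrable (fun x : ℝ => (1 - x) ^ (-α) * x ^ (α - 1)) volume (1/2) 1 := by
    have hr : IntervalIntegrable (fun x : ℝ => x ^ (-α)) volume (1/2) 0 :=
      intervalIntegral.intervalIntegrable_rpow' (by linarith)
    have hr2 := hr.comp_sub_left 1
    norm_num at hr2
    have hc : ContinuousOn (fun x : ℝ => x ^ (α - 1)) (Set.uIcc (1/2) 1) := by
      apply ContinuousOn.rpow_const (by fun_prop)
      intro x hx
      rw [Set.uIcc_of_le (by norm_num : (1:ℝ)/2 ≤ 1)] at hx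
      left; intro h0; rw [h0] at hx; have := hx.1; linarith
    exact hr2.mul_continuousOn hc
  exact h1.trans h2

lemma betaInt_pos (α : ℝ) (hα0 : 0 < α) (hα1 : α < 1) :
    0 < ∫ x in (0:ℝ)..1, (1 - x) ^ (-α) * x ^ (α - 1) := by
  apply intervalIntegral.intervalIntegral_pos_of_pos_on (betaInt_intervalIntegrable α hα0 hα1)
    _ one_pos
  intro x hx
  exact mul_pos (Real.rpow_pos_of_pos (by linarith [hx.2]) _)
    (Real.rpow_pos_of_pos hx.1 _)

lemma beta_shift (α : ℝ) (hα0 : 0 < α) (hα1 : α < 1) (τ t : ℝ) (h : τ < t) :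
    ∫ σ in τ..t, (t - σ) ^ (-α) * (σ - τ) ^ (α - 1)
      = ∫ x in (0:ℝ)..1, (1 - x) ^ (-α) * x ^ (α - 1) := by
  have hL : (0:ℝ) < t - τ := by linarith
  have key := intervalIntegral.integral_comp_mul_add
    (a := 0) (b := 1) (f := fun σ => (t - σ) ^ (-α) * (σ - τ) ^ (α - 1)) (ne_of_gt hL) τ
  have hend0 : (t - τ) * 0 + τ = τ := by ring
  have hend1 : (t - τ) * 1 + τ = t := by ring
  rw [hend0, hend1] at key
  have hpt : ∀ x ∈ Set.uIcc (0:ℝ) 1,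
      (t - ((t - τ) * x + τ)) ^ (-α) * (((t - τ) * x + τ) - τ) ^ (α - 1)
        = (t - τ)⁻¹ * ((1 - x) ^ (-α) * x ^ (α - 1)) := by
    intro x hx
    rw [Set.uIcc_of_le (by norm_num : (0:ℝ) ≤ 1)] at hx
    have e1 : t - ((t - τ) * x + τ) = (t - τ) * (1 - x) := by ring
    have e2 : ((t - τ) * x + τ) - τ = (t - τ) * x := by ring
    rw [e1, e2, Real.mul_rpow hL.le (by linarith [hx.2]), Real.mul_rpow hL.le hx.1]
    have e3 : (t - τ) ^ (-α) * (t - τ) ^ (α - 1) = (t - τ)⁻¹ := by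
      rw [← Real.rpow_add hL]
      have : -α + (α - 1) = -1 := by ring
      rw [this, Real.rpow_neg_one]
    calc (t - τ) ^ (-α) * (1 - x) ^ (-α) * ((t - τ) ^ (α - 1) * x ^ (α - 1))
        = ((t - τ) ^ (-α) * (t - τ) ^ (α - 1)) * ((1 - x) ^ (-α) * x ^ (α - 1)) := by ring
      _ = (t - τ)⁻¹ * ((1 - x) ^ (-α) * x ^ (α - 1)) := by rw [e3]
  rw [intervalIntegral.integral_congr hpt, intervalIntegral.integral_const_mul] at key
  rw [smul_eq_mul] at key
  exact mul_left_cancel₀ (inv_ne_zero (ne_of_gt hL)) key.symm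

lemma gzero (α : ℝ) (hα0 : 0 < α) (hα1 : α < 1) (a b : ℝ)
    (g : ℝ → E) (hg : Measurable g) (K : ℝ) (hK : ∀ τ, ‖g τ‖ ≤ K)
    (H : ∀ s' ∈ Icc a b, ∫ τ in a..s', ((s' - τ) ^ (α - 1)) • g τ = 0) :
    ∀ s' ∈ Icc a b, ∫ τ in a..s', g τ = 0 := by
  have hK0 : 0 ≤ K := le_trans (norm_nonneg (g a)) (hK a)
  intro s' hs'
  rcases eq_or_lt_of_le hs'.1 with heq | hlt
  · rw [← heq, intervalIntegral.integral_same]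
  set μ := volume.restrict (Ioc a s') with hμ
  set F : ℝ × ℝ → E := fun p =>
    if p.2 ≤ p.1 then (((s' - p.1) ^ (-α)) * ((p.1 - p.2) ^ (α - 1))) • g p.2 else 0 with hF
  have hgae : AEStronglyMeasurable g μ := hg.aestronglyMeasurable
  have hgK : ∀ᵐ τ ∂μ, ‖g τ‖ ≤ K := Filter.Eventually.of_forall hK
  have hFm : AEStronglyMeasurable F (μ.prod μ) := by
    apply Measurable.aestronglyMeasurable
    apply Measurable.ite (measurableSet_le measurable_snd measurable_fst)
    · exact (((measurable_const.sub measurable_fst).pow measurable_const).mul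
        ((measurable_fst.sub measurable_snd).pow measurable_const)).smul
        (hg.comp measurable_snd)
    · exact measurable_const
  -- rewrite of sections
  have hsecfun : ∀ σ : ℝ, (fun τ => F (σ, τ))
      = fun τ => ((s' - σ) ^ (-α)) • (if τ ≤ σ then ((σ - τ) ^ (α - 1)) • g τ else 0) := by
    intro σ; funext τ
    by_cases h : τ ≤ σ <;> simp [hF, h, smul_smul]
  have hsec : ∀ σ ∈ Ioc a s', Integrable (fun τ => F (σ, τ)) μ := by
    intro σ hσ
    rw [hsecfun σ]
    exact (if_kernel_integrable (α - 1) a s' σ (by linarith) hσ.2 g hgae K hgK).smul _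
  have hsec' : ∀ᵐ σ ∂μ, Integrable (fun τ => F (σ, τ)) μ :=
    (ae_restrict_mem measurableSet_Ioc).mono hsec
  -- bound on norm integrals
  have hbnd : ∀ σ ∈ Ioc a s', ∫ τ, ‖F (σ, τ)‖ ∂μ
      ≤ ((s' - σ) ^ (-α)) * (K * ((s' - a) ^ α / α)) := by
    intro σ hσ
    have hmaj : ∀ τ, ‖F (σ, τ)‖
        ≤ ((s' - σ) ^ (-α)) * (K * (if τ ≤ σ then ((σ - τ) ^ (α - 1)) else 0)) := by
      intro τ
      by_cases h : τ ≤ σ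
      · have h1 : (0:ℝ) ≤ s' - σ := by linarith [hσ.2]
        have h2 : (0:ℝ) ≤ σ - τ := by linarith
        simp only [hF, h, if_true, if_pos]
        rw [norm_smul, Real.norm_eq_abs, abs_mul,
          abs_of_nonneg (Real.rpow_nonneg h1 _), abs_of_nonneg (Real.rpow_nonneg h2 _)]
        calc (s' - σ) ^ (-α) * (σ - τ) ^ (α - 1) * ‖g τ‖
            ≤ (s' - σ) ^ (-α) * (σ - τ) ^ (α - 1) * K := by
              apply mul_le_mul_of_nonneg_left (hK τ)
              exact mul_nonneg (Real.rpow_nonneg h1 _) (Real.rpow_nonneg h2 _)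
          _ = (s' - σ) ^ (-α) * (K * (σ - τ) ^ (α - 1)) := by ring
      · simp only [hF, h, if_false]
        simp only [norm_zero, mul_zero]
        positivity
    have hmi : Integrable
        (fun τ => ((s' - σ) ^ (-α)) * (K * (if τ ≤ σ then ((σ - τ) ^ (α - 1)) else 0))) μ := by
      have := (if_kernel_integrable (α - 1) a s' σ (by linarith) hσ.2
        (fun _ => (1:ℝ)) (measurable_const.aestronglyMeasurable)
        1 (Filter.Eventually.of_forall (by simp))).const_mul (((s' - σ) ^ (-α)) * K)
      apply this.congr
      apply Filter.Eventually.of_forall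
      intro τ
      by_cases h : τ ≤ σ <;> simp [h] <;> ring
    calc ∫ τ, ‖F (σ, τ)‖ ∂μ
        ≤ ∫ τ, ((s' - σ) ^ (-α)) * (K * (if τ ≤ σ then ((σ - τ) ^ (α - 1)) else 0)) ∂μ := by
          apply integral_mono ((hsec σ hσ).norm) hmi hmaj
      _ = ((s' - σ) ^ (-α) * K) * ∫ τ in Ioc a s', (if τ ≤ σ then ((σ - τ) ^ (α - 1)) else 0) := by
          rw [← integral_const_mul]
          congr 1; funext τ; ring
      _ ≤ ((s' - σ) ^ (-α) * K) * ((s' - a) ^ α / α) := by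
          apply mul_le_mul_of_nonneg_left _
            (mul_nonneg (Real.rpow_nonneg (by linarith [hσ.2] : (0:ℝ) ≤ s' - σ) _) hK0)
          rw [setInt_if_le a s' σ hσ.2, ← intervalIntegral.integral_of_le hσ.1.le,
            rpow_sub_integral (α - 1) a σ (by linarith) hσ.1.le]
          have hexp : α - 1 + 1 = α := by ring
          rw [hexp]
          exact (div_le_div_iff_of_pos_right hα0).2
            (Real.rpow_le_rpow (by linarith [hσ.1.le]) (by linarith [hσ.2]) hα0.le)
      _ = ((s' - σ) ^ (-α)) * (K * ((s' - a) ^ α / α)) := by ring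

  have hintnorm : Integrable (fun σ => ∫ τ, ‖F (σ, τ)‖ ∂μ) μ := by
    have hD : Integrable (fun σ => ((s' - σ) ^ (-α)) * (K * ((s' - a) ^ α / α))) μ := by
      have h0 : IntegrableOn (fun σ => ((s' - σ) ^ (-α)) • (K * ((s' - a) ^ α / α))) (Ioc a s') :=
        kernel_integrableOn (-α) a s' s' (by linarith) le_rfl _
          measurable_const.aestronglyMeasurable (|K * ((s' - a) ^ α / α)|)
          (Filter.Eventually.of_forall (fun τ => le_of_eq (Real.norm_eq_abs _)))
      simp only [smul_eq_mul] at h0; exact h0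
    refine hD.mono' (hFm.norm.integral_prod_right') ?_
    filter_upwards [ae_restrict_mem measurableSet_Ioc] with σ hσ
    rw [Real.norm_eq_abs, abs_of_nonneg (integral_nonneg (fun τ => norm_nonneg _))]
    exact hbnd σ hσ
  have hFint : Integrable F (μ.prod μ) := by
    rw [integrable_prod_iff hFm]
    exact ⟨hsec', hintnorm⟩
  have hswap := integral_integral_swap (f := fun σ τ => F (σ, τ)) hFint
  -- left side is 0
  have hinner0 : ∀ σ ∈ Ioc a s', (∫ τ, F (σ, τ) ∂μ) = 0 := by
    intro σ hσ
    rw [hsecfun σ, integral_smul]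
    rw [show μ = volume.restrict (Ioc a s') from rfl]
    rw [setInt_if_le a s' σ hσ.2, ← intervalIntegral.integral_of_le hσ.1.le,
      H σ ⟨hσ.1.le, hσ.2.trans hs'.2⟩, smul_zero]
  have hleft : (∫ σ, ∫ τ, F (σ, τ) ∂μ ∂μ) = 0 := by
    rw [show (∫ σ, ∫ τ, F (σ, τ) ∂μ ∂μ) = ∫ σ in Ioc a s', ∫ τ, F (σ, τ) ∂μ from rfl]
    rw [setIntegral_congr_fun measurableSet_Ioc (g := fun _ => (0:E)) (fun σ hσ => hinner0 σ hσ)]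
    simp
  -- right side
  set B := ∫ x in (0:ℝ)..1, (1 - x) ^ (-α) * x ^ (α - 1) with hB
  have hinnerB : ∀ᵐ τ ∂volume, τ ∈ Ioc a s' → (∫ σ, F (σ, τ) ∂μ) = B • g τ := by
    have hne : ∀ᵐ τ : ℝ ∂volume, τ ≠ s' := by
      rw [ae_iff]; simpa using measure_singleton s'
    filter_upwards [hne] with τ hτ hmem
    have hτs : τ < s' := lt_of_le_of_ne hmem.2 hτ
    have he : (fun σ => F (σ, τ)) = fun σ =>
        (if τ ≤ σ then (((s' - σ) ^ (-α)) * ((σ - τ) ^ (α - 1))) • g τ else 0) := by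
      funext σ; by_cases h : τ ≤ σ <;> simp [hF, h]
    rw [show (∫ σ, F (σ, τ) ∂μ) = ∫ σ in Ioc a s', F (σ, τ) from rfl, he,
      setInt_if_ge a s' τ hmem.1 _, integral_Icc_eq_integral_Ioc,
      ← intervalIntegral.integral_of_le hτs.le, intervalIntegral.integral_smul_const,
      beta_shift α hα0 hα1 τ s' hτs]
  have hright : (∫ τ, ∫ σ, F (σ, τ) ∂μ ∂μ) = B • ∫ τ in Ioc a s', g τ := by
    rw [show (∫ τ, ∫ σ, F (σ, τ) ∂μ ∂μ) = ∫ τ in Ioc a s', ∫ σ, F (σ, τ) ∂μ from rfl]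
    rw [setIntegral_congr_ae measurableSet_Ioc hinnerB, integral_smul]
  have hBpos := betaInt_pos α hα0 hα1
  rw [hleft, hright] at hswap
  rw [intervalIntegral.integral_of_le hs'.1]
  rcases smul_eq_zero.1 hswap.symm with hB0 | hgz
  · exact absurd hB0 (ne_of_gt (hB ▸ hBpos))
  · exact hgz

lemma key_vanish (α : ℝ) (hα0 : 0 < α) (hα1 : α < 1) (a b t : ℝ) (hab : a ≤ b) (hbt : b < t)
    (g : ℝ → E) (hg : Measurable g) (K : ℝ) (hK : ∀ τ, ‖g τ‖ ≤ K)
    (H : ∀ s' ∈ Icc a b, ∫ τ in a..s', ((s' - τ) ^ (α - 1)) • g τ = 0) :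
    ∫ τ in a..b, ((t - τ) ^ (α - 1)) • g τ = 0 := by
  have hK0 : 0 ≤ K := le_trans (norm_nonneg (g a)) (hK a)
  have hGz := gzero α hα0 hα1 a b g hg K hK H
  rcases eq_or_lt_of_le hab with heq | hlt
  · rw [← heq, intervalIntegral.integral_same]
  have htb : (0:ℝ) < t - b := by linarith
  set μ := volume.restrict (Ioc a b) with hμ
  have hμfin : μ Set.univ < ⊤ := by
    rw [hμ, Measure.restrict_apply MeasurableSet.univ, Set.univ_inter]
    exact measure_Ioc_lt_top
  set k2 : ℝ → ℝ := fun σ => (1 - α) * (t - σ) ^ (α - 2) with hk2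
  set F : ℝ × ℝ → E := fun p => if p.2 ≤ p.1 then (k2 p.1) • g p.2 else 0 with hF
  have hFm : AEStronglyMeasurable F (μ.prod μ) := by
    apply Measurable.aestronglyMeasurable
    apply Measurable.ite (measurableSet_le measurable_snd measurable_fst)
    · exact ((measurable_const.mul
        ((measurable_const.sub measurable_fst).pow measurable_const))).smul
        (hg.comp measurable_snd)
    · exact measurable_const
  have hM2 : ∀ σ ∈ Ioc a b, |k2 σ| ≤ (1 - α) * (t - b) ^ (α - 2) := by
    intro σ hσ
    have h1 : (0:ℝ) < t - σ := by linarith [hσ.2]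
    rw [hk2, abs_mul, abs_of_nonneg (by linarith : (0:ℝ) ≤ 1 - α),
      abs_of_nonneg (Real.rpow_nonneg h1.le _)]
    exact mul_le_mul_of_nonneg_left
      (Real.rpow_le_rpow_of_nonpos htb (by linarith [hσ.2]) (by linarith)) (by linarith)
  have hFint : Integrable F (μ.prod μ) := by
    have hconst : Integrable (fun _ : ℝ × ℝ => (1 - α) * (t - b) ^ (α - 2) * K) (μ.prod μ) := by
      rw [integrable_const_iff]
      right
      constructor
      calc (μ.prod μ) Set.univ = μ Set.univ * μ Set.univ := by
            rw [← Set.univ_prod_univ, Measure.prod_prod]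
        _ < ⊤ := ENNReal.mul_lt_top hμfin hμfin
    refine hconst.mono' hFm ?_
    have hmem : ∀ᵐ p ∂(μ.prod μ), p ∈ (Ioc a b) ×ˢ (Ioc a b) := by
      rw [hμ, Measure.prod_restrict]
      exact ae_restrict_mem (measurableSet_Ioc.prod measurableSet_Ioc)
    filter_upwards [hmem] with p hp
    by_cases h : p.2 ≤ p.1
    · rw [hF]; simp only [h, if_true]
      rw [norm_smul, Real.norm_eq_abs]
      exact mul_le_mul (hM2 p.1 hp.1) (hK p.2) (norm_nonneg _)
        (mul_nonneg (by linarith) (Real.rpow_nonneg htb.le _))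
    · rw [hF]; simp only [h, if_false, norm_zero]
      exact mul_nonneg (mul_nonneg (by linarith) (Real.rpow_nonneg htb.le _)) hK0
  have hswap := integral_integral_swap (f := fun σ τ => F (σ, τ)) hFint
  have hif : ∀ σ : ℝ, (fun τ => F (σ, τ)) = fun τ => (k2 σ) • (if τ ≤ σ then g τ else 0) := by
    intro σ; funext τ
    by_cases h : τ ≤ σ <;> simp [hF, h]
  have hinner0 : ∀ σ ∈ Ioc a b, (∫ τ, F (σ, τ) ∂μ) = 0 := by
    intro σ hσ
    rw [hif σ, integral_smul]
    have he2 : (fun τ => if τ ≤ σ then g τ else (0:E)) = fun τ => if τ ≤ σ then (fun x => g x) τ else 0 := rfl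
    rw [show (∫ τ, (if τ ≤ σ then g τ else 0) ∂μ) = ∫ τ in Ioc a b, (if τ ≤ σ then g τ else 0) from rfl]
    rw [setInt_if_le a b σ hσ.2, ← intervalIntegral.integral_of_le hσ.1.le,
      hGz σ ⟨hσ.1.le, hσ.2⟩, smul_zero]
  have hleft : (∫ σ, ∫ τ, F (σ, τ) ∂μ ∂μ) = 0 := by
    rw [show (∫ σ, ∫ τ, F (σ, τ) ∂μ ∂μ) = ∫ σ in Ioc a b, ∫ τ, F (σ, τ) ∂μ from rfl]
    rw [setIntegral_congr_fun measurableSet_Ioc (g := fun _ => (0:E)) (fun σ hσ => hinner0 σ hσ)]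
    simp
  have hk2int : ∀ τ, a < τ → τ ≤ b →
      ∫ σ in τ..b, k2 σ = (t - b) ^ (α - 1) - (t - τ) ^ (α - 1) := by
    intro τ _ hτb
    have h1 : (0:ℝ) < t - τ := by linarith
    rw [hk2, intervalIntegral.integral_const_mul,
      intervalIntegral.integral_comp_sub_left (fun x => x ^ (α - 2)) t]
    rw [integral_rpow (Or.inr ⟨by intro hh; linarith,
      Set.notMem_uIcc_of_lt htb h1⟩)]
    have he : α - 2 + 1 = α - 1 := by ring
    rw [he]
    have hα1' : α - 1 ≠ 0 := by intro hh; linarith [sub_eq_zero.1 hh]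
    field_simp
    ring
  have hinnerR : ∀ τ ∈ Ioc a b,
      (∫ σ, F (σ, τ) ∂μ) = (((t - b) ^ (α - 1)) - ((t - τ) ^ (α - 1))) • g τ := by
    intro τ hmem
    have he : (fun σ => F (σ, τ)) = fun σ => (if τ ≤ σ then (k2 σ) • g τ else 0) := rfl
    rw [show (∫ σ, F (σ, τ) ∂μ) = ∫ σ in Ioc a b, F (σ, τ) from rfl]
    rw [show (fun σ => F (σ, τ)) = fun σ => (if τ ≤ σ then (k2 σ) • g τ else 0) from rfl]
    rw [setInt_if_ge a b τ hmem.1 _, integral_Icc_eq_integral_Ioc,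
      ← intervalIntegral.integral_of_le hmem.2, intervalIntegral.integral_smul_const,
      hk2int τ hmem.1 hmem.2]
  have hright : (∫ τ, ∫ σ, F (σ, τ) ∂μ ∂μ)
      = ∫ τ in Ioc a b, (((t - b) ^ (α - 1)) - ((t - τ) ^ (α - 1))) • g τ := by
    rw [show (∫ τ, ∫ σ, F (σ, τ) ∂μ ∂μ) = ∫ τ in Ioc a b, ∫ σ, F (σ, τ) ∂μ from rfl]
    exact setIntegral_congr_fun measurableSet_Ioc (fun τ hτ => hinnerR τ hτ)
  have hgint : Integrable g μ :=
    (integrable_const K).mono' hg.aestronglyMeasurable (Filter.Eventually.of_forall hK)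
  have hi2 : Integrable (fun τ => ((t - τ) ^ (α - 1)) • g τ) μ :=
    kernel_integrableOn (α - 1) a b t (by linarith) (by linarith) g hg.aestronglyMeasurable K
      (Filter.Eventually.of_forall hK)
  have hsplit : (∫ τ in Ioc a b, (((t - b) ^ (α - 1)) - ((t - τ) ^ (α - 1))) • g τ)
      = ((t - b) ^ (α - 1)) • (∫ τ in Ioc a b, g τ)
        - ∫ τ in Ioc a b, ((t - τ) ^ (α - 1)) • g τ := by
    have hi1 : Integrable (fun τ => ((t - b) ^ (α - 1)) • g τ) μ := hgint.smul ((t - b) ^ (α - 1))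
    rw [← integral_smul, ← integral_sub hi1 hi2]
    congr 1; funext τ
    rw [sub_smul]
  have hGb : (∫ τ in Ioc a b, g τ) = 0 := by
    rw [← intervalIntegral.integral_of_le hab]
    exact hGz b ⟨hab, le_refl b⟩
  rw [hleft, hright, hsplit, hGb, smul_zero, zero_sub] at hswap
  rw [intervalIntegral.integral_of_le hab]
  exact (neg_eq_zero.1 hswap.symm)

end MCHelpers

lemma aesm_comp {X : Type*} [TopologicalSpace X] [MeasurableSpace X] [OpensMeasurableSpace X]
    [NormalSpace X] {n : ℕ} (g : X → Evec n) (S : Set X) (hS : IsClosed S)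
    (hg : ContinuousOn g S) (w : ℝ → X) (μ : Measure ℝ) (hw : AEMeasurable w μ)
    (hmem : ∀ᵐ τ ∂μ, w τ ∈ S) :
    AEStronglyMeasurable (fun τ => g (w τ)) μ := by
  obtain ⟨G, hG⟩ := ContinuousMap.exists_restrict_eq hS ⟨S.restrict g, hg.restrict⟩
  have hGg : ∀ z ∈ S, G z = g z := fun z hz => by
    exact congrFun (congrArg ContinuousMap.toFun hG) ⟨z, hz⟩
  have h1 : AEStronglyMeasurable (fun τ => G (w τ)) μ :=
    (G.continuous.measurable.comp_aemeasurable hw).aestronglyMeasurable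
  apply h1.congr
  filter_upwards [hmem] with τ hτ
  exact hGg _ hτ

/-- the semigroup (concatenation) property of motions: the motion generated from
an intermediate position of a motion coincides with the motion generated from the original
position by the concatenated control realizations. -/
theorem motion_concatenation
    (t0 ϑ : ℝ) (hT : t0 < ϑ) (n : ℕ) (hn : 1 ≤ n) (α : ℝ) (hα : α ∈ Set.Ioo (0 : ℝ) 1)
    (r s : ℕ) (hr : 1 ≤ r) (hs : 1 ≤ s)
    (U : Set (Evec r)) (V : Set (Evec s)) (hUc : IsCompact U) (hUne : U.Nonempty)
    (hVc : IsCompact V) (hVne : V.Nonempty)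
    (f : ℝ → Evec n → Evec r → Evec s → Evec n)
    (hA1 : CondA1 t0 ϑ U V f) (hA2 : CondA2 t0 ϑ U V f)
    (c : ℝ) (hc : 0 < c) (hA3 : CondA3 t0 ϑ U V f c)
    (R0 : ℝ) (hR0 : 0 < R0)
    (tstar : ℝ) (wstar φstar : ℝ → Evec n)
    (hadm : IsAdmissible t0 ϑ α c R0 tstar wstar φstar)
    (that : ℝ) (hthat : that ∈ Icc tstar ϑ)
    (u : ℝ → Evec r) (v : ℝ → Evec s)
    (hu : IsControl tstar ϑ U u) (hv : IsControl tstar ϑ V v)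
    (x : ℝ → Evec n) (hx : IsMotion t0 ϑ α f tstar wstar φstar u v x)
    (φhat : ℝ → Evec n) (hadm2 : IsAdmissible t0 ϑ α c R0 that x φhat)
    (uhat : ℝ → Evec r) (vhat : ℝ → Evec s)
    (huh : IsControl that ϑ U uhat) (hvh : IsControl that ϑ V vhat)
    (xhat : ℝ → Evec n) (hxh : IsMotion t0 ϑ α f that x φhat uhat vhat xhat) :
    IsMotion t0 ϑ α f tstar wstar φstar
      (fun t => if t < that then u t else uhat t)
      (fun t => if t < that then v t else vhat t) xhat := by
  obtain ⟨hα0, hα1⟩ := hα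
  obtain ⟨hts, hwc, hwR, hφsm, ⟨Kφ, hφK⟩, hweq, hφc⟩ := hadm
  obtain ⟨hth2, hxc2, hxR2, hφhm, ⟨Kφh, hφhK⟩, hxeq2, hφhc⟩ := hadm2
  obtain ⟨hxc, hxl, hxr⟩ := hx
  obtain ⟨hxhc, hxhl, hxhr⟩ := hxh
  obtain ⟨hum, huU⟩ := hu
  obtain ⟨hvm, hvV⟩ := hv
  obtain ⟨huhm, huhU⟩ := huh
  obtain ⟨hvhm, hvhV⟩ := hvh
  have ht0s : t0 ≤ tstar := hts.1
  have hsϑ : tstar ≤ ϑ := hts.2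
  have hsh : tstar ≤ that := hthat.1
  have hhϑ : that ≤ ϑ := hthat.2
  have ht0h : t0 ≤ that := ht0s.trans hsh
  have hαm : (-1:ℝ) < α - 1 := by linarith
  have hΓpos : 0 < Real.Gamma α := Real.Gamma_pos_of_pos hα0
  have hc1 : (1 / Real.Gamma α) ≠ 0 := by positivity
  obtain ⟨Mx, hMx⟩ := isCompact_Icc.exists_bound_of_continuousOn hxc
  obtain ⟨Mxh, hMxh⟩ := isCompact_Icc.exists_bound_of_continuousOn hxhc
  set uu : ℝ → Evec r := fun t => if t < that then u t else uhat t with huu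
  set vv : ℝ → Evec s := fun t => if t < that then v t else vhat t with hvv
  have huum : Measurable uu :=
    Measurable.ite (measurableSet_lt measurable_id measurable_const) hum huhm
  have hvvm : Measurable vv :=
    Measurable.ite (measurableSet_lt measurable_id measurable_const) hvm hvhm
  have huuU : ∀ τ ∈ Icc tstar ϑ, uu τ ∈ U := by
    intro τ hτ
    by_cases h : τ < that
    · rw [huu]; simp only [h, if_true]; exact huU τ hτ
    · rw [huu]; simp only [h, if_false]; exact huhU τ ⟨not_lt.1 h, hτ.2⟩
  have hvvV : ∀ τ ∈ Icc tstar ϑ, vv τ ∈ V := by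
    intro τ hτ
    by_cases h : τ < that
    · rw [hvv]; simp only [h, if_true]; exact hvV τ hτ
    · rw [hvv]; simp only [h, if_false]; exact hvhV τ ⟨not_lt.1 h, hτ.2⟩
  haveI hbs1 : BorelSpace (Evec r × Evec s) := Prod.borelSpace
  haveI hbs2 : BorelSpace (Evec n × Evec r × Evec s) := Prod.borelSpace
  haveI hbs3 : BorelSpace (ℝ × Evec n × Evec r × Evec s) := Prod.borelSpace
  -- the closed set on which f is continuous
  set SS : Set (ℝ × Evec n × Evec r × Evec s) :=
    (Icc t0 ϑ) ×ˢ (univ : Set (Evec n)) ×ˢ U ×ˢ V with hSS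
  have hSclosed : IsClosed SS :=
    isClosed_Icc.prod (isClosed_univ.prod (hUc.isClosed.prod hVc.isClosed))
  have hcompmeas : ∀ (sE : Set ℝ), MeasurableSet sE → sE ⊆ Icc t0 ϑ →
      ∀ (y : ℝ → Evec n), ContinuousOn y (Icc t0 ϑ) →
      ∀ (p : ℝ → Evec r), Measurable p → ∀ (q : ℝ → Evec s), Measurable q →
      (∀ τ ∈ sE, p τ ∈ U) → (∀ τ ∈ sE, q τ ∈ V) →
      AEStronglyMeasurable (fun τ => f τ (y τ) (p τ) (q τ)) (volume.restrict sE) := by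
    intro sE hsE hsub y hy p hp q hq hpU hqV
    have hyae : AEMeasurable y (volume.restrict sE) :=
      (hy.aemeasurable measurableSet_Icc).mono_measure (Measure.restrict_mono hsub le_rfl)
    have hw : AEMeasurable (fun τ => (τ, y τ, p τ, q τ)) (volume.restrict sE) :=
      aemeasurable_id.prodMk (hyae.prodMk (hp.aemeasurable.prodMk hq.aemeasurable))
    have hmem : ∀ᵐ τ ∂(volume.restrict sE), (τ, y τ, p τ, q τ) ∈ SS := by
      filter_upwards [ae_restrict_mem hsE] with τ hτ
      exact ⟨hsub hτ, ⟨mem_univ _, ⟨hpU τ hτ, hqV τ hτ⟩⟩⟩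
    exact aesm_comp (fun z : ℝ × Evec n × Evec r × Evec s => f z.1 z.2.1 z.2.2.1 z.2.2.2)
      SS hSclosed hA1 _ _ hw hmem
  -- the combined Caputo-derivative candidate
  set ψ : ℝ → Evec n := fun τ => if τ < tstar then φstar τ else f τ (x τ) (u τ) (v τ) with hψ
  have hψm : AEStronglyMeasurable ψ (volume.restrict (Icc t0 that)) := by
    rw [← Set.Ico_union_Icc_eq_Icc ht0s hsh, aestronglyMeasurable_union_iff]
    constructor
    · apply hφsm.aestronglyMeasurable.congr
      filter_upwards [ae_restrict_mem measurableSet_Ico] with τ hτ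
      rw [hψ]; simp only [hτ.2, if_true]
    · have hFA : AEStronglyMeasurable (fun τ => f τ (x τ) (u τ) (v τ))
          (volume.restrict (Icc tstar that)) :=
        hcompmeas (Icc tstar that) measurableSet_Icc (Icc_subset_Icc ht0s hhϑ) x hxc u hum v hvm
          (fun τ hτ => huU τ ⟨hτ.1, hτ.2.trans hhϑ⟩) (fun τ hτ => hvV τ ⟨hτ.1, hτ.2.trans hhϑ⟩)
      apply hFA.congr
      filter_upwards [ae_restrict_mem measurableSet_Icc] with τ hτ
      rw [hψ]; simp only [not_lt.2 hτ.1, if_false]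
  set Kψ : ℝ := max Kφ ((1 + Mx) * c) with hKψ
  have hψb : ∀ᵐ τ ∂(volume.restrict (Icc t0 that)), ‖ψ τ‖ ≤ Kψ := by
    rw [ae_restrict_iff' measurableSet_Icc]
    have hφK' : ∀ᵐ τ ∂volume, τ ∈ Icc t0 tstar → ‖φstar τ‖ ≤ Kφ :=
      (ae_restrict_iff' measurableSet_Icc).1 hφK
    filter_upwards [hφK'] with τ hφτ hτ
    by_cases h : τ < tstar
    · rw [hψ]; simp only [h, if_true]
      exact le_max_of_le_left (hφτ ⟨hτ.1, h.le⟩)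
    · rw [hψ]; simp only [h, if_false]
      push_neg at h
      have hτϑ : τ ∈ Icc t0 ϑ := ⟨hτ.1, hτ.2.trans hhϑ⟩
      have hb := hA3 τ hτϑ (x τ) (u τ) (huU τ ⟨h, hτ.2.trans hhϑ⟩)
        (v τ) (hvV τ ⟨h, hτ.2.trans hhϑ⟩)
      refine le_max_of_le_right (hb.trans ?_)
      exact mul_le_mul_of_nonneg_right (by linarith [hMx τ hτϑ]) hc.le
  -- interval integrability of the kernels
  have hψii : ∀ (aa cc c' : ℝ), t0 ≤ aa → aa ≤ cc → cc ≤ that → cc ≤ c' →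
      IntervalIntegrable (fun τ => ((c' - τ) ^ (α - 1)) • ψ τ) volume aa cc := by
    intro aa cc c' h1 h2 h3 h4
    have hsub : Ioc aa cc ⊆ Icc t0 that := fun τ hτ => ⟨h1.trans hτ.1.le, hτ.2.trans h3⟩
    exact kernel_intervalIntegrable _ _ _ _ hαm h2 h4 ψ
      (hψm.mono_measure (Measure.restrict_mono hsub le_rfl)) Kψ
      (ae_restrict_of_ae_restrict_of_subset hsub hψb)
  have hφhii : ∀ (cc c' : ℝ), t0 ≤ cc → cc ≤ that → cc ≤ c' →
      IntervalIntegrable (fun τ => ((c' - τ) ^ (α - 1)) • φhat τ) volume t0 cc := by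
    intro cc c' h2 h3 h4
    have hsub : Ioc t0 cc ⊆ Icc t0 that := fun τ hτ => ⟨hτ.1.le, hτ.2.trans h3⟩
    exact kernel_intervalIntegrable _ _ _ _ hαm h2 h4 φhat
      hφhm.aestronglyMeasurable Kφh (ae_restrict_of_ae_restrict_of_subset hsub hφhK)
  -- singletons are null
  have hneS : ∀ z : ℝ, ∀ᵐ τ : ℝ ∂volume, τ ≠ z := by
    intro z; rw [ae_iff]; simpa using measure_singleton z
  have hx0 : x t0 = wstar t0 := hxl t0 ⟨le_refl t0, ht0s⟩
  -- Step E1 : the RL integral of ψ reproduces x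
  have E1 : ∀ t' ∈ Icc t0 that,
      (1 / Real.Gamma α) • (∫ τ in t0..t', ((t' - τ) ^ (α - 1)) • ψ τ) = x t' - x t0 := by
    intro t' ht'
    rcases le_total t' tstar with hcase | hcase
    · have hxw : x t' = wstar t' := hxl t' ⟨ht'.1, hcase⟩
      have hcongr : (∫ τ in t0..t', ((t' - τ) ^ (α - 1)) • ψ τ)
          = ∫ τ in t0..t', ((t' - τ) ^ (α - 1)) • φstar τ := by
        apply intervalIntegral.integral_congr_ae
        filter_upwards [hneS tstar] with τ hτ hτmem
        rw [Set.uIoc_of_le ht'.1] at hτmem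
        have hlt : τ < tstar := lt_of_le_of_ne (hτmem.2.trans hcase) hτ
        rw [hψ]; simp only [hlt, if_true]
      rw [hcongr, hxw, hx0, hweq t' ⟨ht'.1, hcase⟩, add_sub_cancel_left]
      rfl
    · have hxr' := hxr t' ⟨hcase, ht'.2.trans hhϑ⟩
      have hii1 := hψii t0 tstar t' le_rfl ht0s hsh (hcase)
      have hii2 : IntervalIntegrable (fun τ => ((t' - τ) ^ (α - 1)) • ψ τ) volume tstar t' := by
        have hsub : Ioc tstar t' ⊆ Icc t0 that :=
          fun τ hτ => ⟨ht0s.trans hτ.1.le, hτ.2.trans ht'.2⟩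
        exact kernel_intervalIntegrable _ _ _ _ hαm hcase le_rfl ψ
          (hψm.mono_measure (Measure.restrict_mono hsub le_rfl)) Kψ
          (ae_restrict_of_ae_restrict_of_subset hsub hψb)
      rw [← intervalIntegral.integral_add_adjacent_intervals hii1 hii2]
      have hpc1 : (∫ τ in t0..tstar, ((t' - τ) ^ (α - 1)) • ψ τ)
          = ∫ τ in t0..tstar, ((t' - τ) ^ (α - 1)) • φstar τ := by
        apply intervalIntegral.integral_congr_ae
        filter_upwards [hneS tstar] with τ hτ hτmem
        rw [Set.uIoc_of_le ht0s] at hτmem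
        have hlt : τ < tstar := lt_of_le_of_ne hτmem.2 hτ
        rw [hψ]; simp only [hlt, if_true]
      have hpc2 : (∫ τ in tstar..t', ((t' - τ) ^ (α - 1)) • ψ τ)
          = ∫ τ in tstar..t', ((t' - τ) ^ (α - 1)) • f τ (x τ) (u τ) (v τ) := by
        apply intervalIntegral.integral_congr
        intro τ hτ
        rw [Set.uIcc_of_le hcase] at hτ
        rw [hψ]; simp only [not_lt.2 hτ.1, if_false]
      rw [hpc1, hpc2, hxr', hx0, smul_add]
      abel
  -- Step E2 : the RL integral of φhat reproduces x
  have E2 : ∀ t' ∈ Icc t0 that,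
      (1 / Real.Gamma α) • (∫ τ in t0..t', ((t' - τ) ^ (α - 1)) • φhat τ) = x t' - x t0 := by
    intro t' ht'
    rw [hxeq2 t' ht', add_sub_cancel_left]
    rfl
  have Hdiff : ∀ t' ∈ Icc t0 that,
      (∫ τ in t0..t', ((t' - τ) ^ (α - 1)) • ψ τ)
        = ∫ τ in t0..t', ((t' - τ) ^ (α - 1)) • φhat τ := by
    intro t' ht'
    exact smul_right_injective (Evec n) hc1 ((E1 t' ht').trans (E2 t' ht').symm)
  -- measurable bounded representative of ψ - φhat
  have hGm : AEStronglyMeasurable (fun τ => ψ τ - φhat τ) (volume.restrict (Icc t0 that)) :=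
    hψm.sub hφhm.aestronglyMeasurable
  set KG' : ℝ := max (Kψ + Kφh) 0 with hKG'
  have hGb : ∀ᵐ τ ∂(volume.restrict (Icc t0 that)), ‖ψ τ - φhat τ‖ ≤ Kψ + Kφh := by
    filter_upwards [hψb, hφhK] with τ h1 h2
    exact (norm_sub_le _ _).trans (add_le_add h1 h2)
  set g1 : ℝ → Evec n := hGm.mk _ with hg1
  set g2 : ℝ → Evec n := fun τ => if ‖g1 τ‖ ≤ KG' then g1 τ else 0 with hg2
  have hg2m : Measurable g2 :=
    Measurable.ite (measurableSet_le hGm.stronglyMeasurable_mk.measurable.norm measurable_const)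
      hGm.stronglyMeasurable_mk.measurable measurable_const
  have hg2b : ∀ τ, ‖g2 τ‖ ≤ KG' := by
    intro τ
    by_cases h : ‖g1 τ‖ ≤ KG'
    · rw [hg2]; simp only [h, if_true]
    · rw [hg2]; simp only [h, if_false, norm_zero]; exact le_max_right _ _
  have hg2eq : ∀ᵐ τ ∂(volume.restrict (Icc t0 that)), g2 τ = ψ τ - φhat τ := by
    filter_upwards [hGm.ae_eq_mk, hGb] with τ h1 h2
    have hle : ‖g1 τ‖ ≤ KG' := by
      rw [hg1, ← h1]; exact le_max_of_le_left h2
    rw [hg2]; simp only [hle, if_true]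
    rw [hg1, ← h1]
  -- the kernel integrals of g2 vanish
  have H2 : ∀ s' ∈ Icc t0 that, (∫ τ in t0..s', ((s' - τ) ^ (α - 1)) • g2 τ) = 0 := by
    intro s' hs'
    have hsub : Ioc t0 s' ⊆ Icc t0 that := fun τ hτ => ⟨hτ.1.le, hτ.2.trans hs'.2⟩
    have hae : ∀ᵐ τ ∂(volume.restrict (Ioc t0 s')),
        ((s' - τ) ^ (α - 1)) • g2 τ = ((s' - τ) ^ (α - 1)) • (ψ τ - φhat τ) := by
      filter_upwards [ae_restrict_of_ae_restrict_of_subset hsub hg2eq] with τ h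
      rw [h]
    rw [intervalIntegral.integral_of_le hs'.1, integral_congr_ae hae,
      ← intervalIntegral.integral_of_le hs'.1]
    have hsm : (∫ τ in t0..s', ((s' - τ) ^ (α - 1)) • (ψ τ - φhat τ))
        = (∫ τ in t0..s', ((s' - τ) ^ (α - 1)) • ψ τ)
          - ∫ τ in t0..s', ((s' - τ) ^ (α - 1)) • φhat τ := by
      rw [← intervalIntegral.integral_sub (hψii t0 s' s' le_rfl hs'.1 hs'.2 le_rfl)
        (hφhii s' s' hs'.1 hs'.2 le_rfl)]
      congr 1; funext τ; rw [smul_sub]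
    rw [hsm, Hdiff s' hs', sub_self]
  -- the goals
  refine ⟨hxhc, ?_, ?_⟩
  · intro t ht
    rw [hxhl t ⟨ht.1, ht.2.trans hsh⟩]
    exact hxl t ht
  intro t ht
  rcases le_or_gt t that with hA | hB
  · -- t ≤ that : xhat coincides with x
    rw [hxhl t ⟨ht0s.trans ht.1, hA⟩, hxr t ht]
    congr 2
    apply intervalIntegral.integral_congr_ae
    filter_upwards [hneS that] with τ hτ hτmem
    rw [Set.uIoc_of_le ht.1] at hτmem
    have hlt : τ < that := lt_of_le_of_ne (hτmem.2.trans hA) hτ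
    have hxeq : x τ = xhat τ :=
      (hxhl τ ⟨ht0s.trans hτmem.1.le, hlt.le⟩).symm
    rw [hxeq, huu, hvv]
    simp only [hlt, if_true]
  · -- that < t
    have htϑ : t ∈ Icc that ϑ := ⟨hB.le, ht.2⟩
    -- integrability of the concatenated right-hand side
    have hF3m : AEStronglyMeasurable (fun τ => f τ (xhat τ) (uu τ) (vv τ))
        (volume.restrict (Icc tstar ϑ)) :=
      hcompmeas (Icc tstar ϑ) measurableSet_Icc (Icc_subset_Icc ht0s le_rfl) xhat hxhc
        uu huum vv hvvm huuU hvvV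
    have hF3b : ∀ᵐ τ ∂(volume.restrict (Icc tstar ϑ)),
        ‖f τ (xhat τ) (uu τ) (vv τ)‖ ≤ (1 + Mxh) * c := by
      filter_upwards [ae_restrict_mem measurableSet_Icc] with τ hτ
      have hτϑ : τ ∈ Icc t0 ϑ := ⟨ht0s.trans hτ.1, hτ.2⟩
      refine (hA3 τ hτϑ (xhat τ) (uu τ) (huuU τ hτ) (vv τ) (hvvV τ hτ)).trans ?_
      exact mul_le_mul_of_nonneg_right (by linarith [hMxh τ hτϑ]) hc.le
    have hF3ii : ∀ (aa cc : ℝ), tstar ≤ aa → aa ≤ cc → cc ≤ ϑ → cc ≤ t →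
        IntervalIntegrable (fun τ => ((t - τ) ^ (α - 1)) • f τ (xhat τ) (uu τ) (vv τ))
          volume aa cc := by
      intro aa cc h1 h2 h3 h4
      have hsub : Ioc aa cc ⊆ Icc tstar ϑ := fun τ hτ => ⟨h1.trans hτ.1.le, hτ.2.trans h3⟩
      exact kernel_intervalIntegrable _ _ _ _ hαm h2 h4 _
        (hF3m.mono_measure (Measure.restrict_mono hsub le_rfl)) ((1 + Mxh) * c)
        (ae_restrict_of_ae_restrict_of_subset hsub hF3b)
    -- key uniqueness conclusion at time t
    have hker_eq : (∫ τ in t0..that, ((t - τ) ^ (α - 1)) • ψ τ)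
        = ∫ τ in t0..that, ((t - τ) ^ (α - 1)) • φhat τ := by
      have h0 := key_vanish α hα0 hα1 t0 that t ht0h hB g2 hg2m KG' hg2b H2
      have hae : ∀ᵐ τ ∂(volume.restrict (Ioc t0 that)),
          ((t - τ) ^ (α - 1)) • g2 τ = ((t - τ) ^ (α - 1)) • (ψ τ - φhat τ) := by
        filter_upwards [ae_restrict_of_ae_restrict_of_subset Ioc_subset_Icc_self hg2eq] with τ h
        rw [h]
      rw [intervalIntegral.integral_of_le ht0h, integral_congr_ae hae,
        ← intervalIntegral.integral_of_le ht0h] at h0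
      have hsm : (∫ τ in t0..that, ((t - τ) ^ (α - 1)) • (ψ τ - φhat τ))
          = (∫ τ in t0..that, ((t - τ) ^ (α - 1)) • ψ τ)
            - ∫ τ in t0..that, ((t - τ) ^ (α - 1)) • φhat τ := by
        rw [← intervalIntegral.integral_sub (hψii t0 that t le_rfl ht0h le_rfl hB.le)
          (hφhii that t ht0h le_rfl hB.le)]
        congr 1; funext τ; rw [smul_sub]
      rw [hsm] at h0
      exact sub_eq_zero.1 h0
    -- split the φhat integral
    have e1 : (∫ τ in t0..that, ((t - τ) ^ (α - 1)) • φhat τ)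
        = (∫ τ in t0..tstar, ((t - τ) ^ (α - 1)) • φstar τ)
          + ∫ τ in tstar..that, ((t - τ) ^ (α - 1)) • f τ (xhat τ) (uu τ) (vv τ) := by
      rw [← hker_eq,
        ← intervalIntegral.integral_add_adjacent_intervals
          (hψii t0 tstar t le_rfl ht0s hsh (hsh.trans hB.le))
          (hψii tstar that t ht0s hsh le_rfl hB.le)]
      congr 1
      · apply intervalIntegral.integral_congr_ae
        filter_upwards [hneS tstar] with τ hτ hτmem
        rw [Set.uIoc_of_le ht0s] at hτmem
        have hlt : τ < tstar := lt_of_le_of_ne hτmem.2 hτ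
        rw [hψ]; simp only [hlt, if_true]
      · apply intervalIntegral.integral_congr_ae
        filter_upwards [hneS that] with τ hτ hτmem
        rw [Set.uIoc_of_le hsh] at hτmem
        have hlt : τ < that := lt_of_le_of_ne hτmem.2 hτ
        have hxeq : x τ = xhat τ := (hxhl τ ⟨ht0s.trans hτmem.1.le, hlt.le⟩).symm
        rw [hψ]; simp only [not_lt.2 hτmem.1.le, if_false]
        rw [hxeq, huu, hvv]; simp only [hlt, if_true]
    have e2 : (∫ τ in that..t, ((t - τ) ^ (α - 1)) • f τ (xhat τ) (uhat τ) (vhat τ))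
        = ∫ τ in that..t, ((t - τ) ^ (α - 1)) • f τ (xhat τ) (uu τ) (vv τ) := by
      apply intervalIntegral.integral_congr
      intro τ hτ
      rw [Set.uIcc_of_le hB.le] at hτ
      rw [huu, hvv]; simp only [not_lt.2 hτ.1, if_false]
    have e3 : (∫ τ in tstar..that, ((t - τ) ^ (α - 1)) • f τ (xhat τ) (uu τ) (vv τ))
          + (∫ τ in that..t, ((t - τ) ^ (α - 1)) • f τ (xhat τ) (uu τ) (vv τ))
        = ∫ τ in tstar..t, ((t - τ) ^ (α - 1)) • f τ (xhat τ) (uu τ) (vv τ) :=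
      intervalIntegral.integral_add_adjacent_intervals
        (hF3ii tstar that le_rfl hsh hhϑ hB.le)
        (hF3ii that t hsh hB.le ht.2 le_rfl)
    rw [hxhr t htϑ, hx0, e1, e2, smul_add, ← e3, smul_add]
    abel


end
end
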